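/- arXiv:2008.10101 — 5 statements merged into one kernel-verified Lean document; each statement's English description precedes it below -/
import Mathlib

section
/- Let (J, 𝒜) be a standard Borel space, let ψ be a finite nonnegative Borel measure on J × J, and let σ, τ be finite nonnegative Borel measures on J with σ(J) = τ(J). There exists a σ-τ flow φ with φ ≤ ψ if and only if ψ(S × Sᶜ) ≥ σ(S) − τ(S) for every Borel set S ⊆ J. -/
open MeasureTheory Set Filter Topology
open scoped ENNReal

lemma measure_of_additive {α : Type*} [MeasurableSpace α] (ψ : Measure α) [IsFiniteMeasure ψ]
    (g : {S : Set α // MeasurableSet S} → ℝ)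
    (h0 : ∀ S, 0 ≤ g S) (hle : ∀ S, g S ≤ (ψ S.1).toReal)
    (hadd : ∀ S T U : {S : Set α // MeasurableSet S},
      Disjoint S.1 T.1 → S.1 ∪ T.1 = U.1 → g U = g S + g T) :
    ∃ φ : Measure α, φ ≤ ψ ∧ ∀ S : {S : Set α // MeasurableSet S}, g S = (φ S.1).toReal := by
  classical
  have hg0 : g ⟨∅, MeasurableSet.empty⟩ = 0 := by
    have := hadd ⟨∅, MeasurableSet.empty⟩ ⟨∅, MeasurableSet.empty⟩ ⟨∅, MeasurableSet.empty⟩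
      (disjoint_bot_left) (by simp)
    linarith
  -- countable additivity
  have hcadd : ∀ ⦃f : ℕ → Set α⦄ (h : ∀ i, MeasurableSet (f i)), Pairwise (Function.onFun Disjoint f) →
      ENNReal.ofReal (g ⟨⋃ i, f i, MeasurableSet.iUnion h⟩)
        = ∑' i, ENNReal.ofReal (g ⟨f i, h i⟩) := by
    intro f h hpd
    set G : ℕ → ℝ := fun n => g ⟨f n, h n⟩ with hG
    set U : ℕ → Set α := fun n => ⋃ i, f (i + n) with hUdef
    have hUm : ∀ n, MeasurableSet (U n) := fun n => MeasurableSet.iUnion (fun i => h _)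
    have hU0 : U 0 = ⋃ i, f i := by simp [hUdef]
    have hUsucc : ∀ n, U n = f n ∪ U (n + 1) := by
      intro n
      ext x
      simp only [hUdef, mem_iUnion, mem_union]
      constructor
      · rintro ⟨i, hi⟩
        cases i with
        | zero => left; simpa using hi
        | succ k =>
          right; exact ⟨k, by rwa [show k + (n + 1) = k + 1 + n by omega]⟩
      · rintro (hx | ⟨k, hk⟩)
        · exact ⟨0, by simpa using hx⟩
        · exact ⟨k + 1, by rwa [show k + 1 + n = k + (n + 1) by omega]⟩
    have hdisj : ∀ n, Disjoint (f n) (U (n + 1)) := by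
      intro n
      refine Set.disjoint_iUnion_right.2 fun i => hpd ?_
      omega
    have hpartial : ∀ n, g ⟨⋃ i, f i, MeasurableSet.iUnion h⟩
        = (∑ i ∈ Finset.range n, G i) + g ⟨U n, hUm n⟩ := by
      intro n
      induction n with
      | zero =>
        simp only [Finset.range_zero, Finset.sum_empty, zero_add]
        exact congrArg g (Subtype.ext hU0.symm)
      | succ n ih =>
        have hstep : g ⟨U n, hUm n⟩ = G n + g ⟨U (n + 1), hUm (n + 1)⟩ :=
          hadd ⟨f n, h n⟩ ⟨U (n + 1), hUm (n + 1)⟩ ⟨U n, hUm n⟩ (hdisj n) (hUsucc n).symm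
        rw [Finset.sum_range_succ, ih, hstep]; ring
    have hInter : ⋂ n, U n = (∅ : Set α) := by
      rw [eq_empty_iff_forall_notMem]
      intro x hx
      simp only [mem_iInter] at hx
      obtain ⟨i0, hi0⟩ := mem_iUnion.1 (hx 0)
      obtain ⟨j, hj⟩ := mem_iUnion.1 (hx (i0 + 0 + 1))
      have hne : i0 + 0 ≠ j + (i0 + 0 + 1) := by omega
      exact Set.disjoint_left.1 (hpd hne) hi0 hj
    have hanti : Antitone U := by
      refine antitone_nat_of_succ_le fun n => ?_
      rw [hUsucc n]; exact subset_union_right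
    have htail0 : Tendsto (fun n => ψ (U n)) atTop (𝓝 0) := by
      have := MeasureTheory.tendsto_measure_iInter_atTop (μ := ψ)
        (fun n => (hUm n).nullMeasurableSet) hanti ⟨0, measure_ne_top _ _⟩
      rwa [hInter, measure_empty] at this
    have htailR : Tendsto (fun n => (ψ (U n)).toReal) atTop (𝓝 0) := by
      have hcont : Tendsto ENNReal.toReal (𝓝 0) (𝓝 0) := by
        simpa using ENNReal.tendsto_toReal (a := 0) (by simp)
      exact hcont.comp htail0
    have hgtail : Tendsto (fun n => g ⟨U n, hUm n⟩) atTop (𝓝 0) :=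
      squeeze_zero (fun n => h0 _) (fun n => hle _) htailR
    have hsum : Tendsto (fun n => ∑ i ∈ Finset.range n, G i) atTop
        (𝓝 (g ⟨⋃ i, f i, MeasurableSet.iUnion h⟩)) := by
      have : (fun n => ∑ i ∈ Finset.range n, G i)
          = fun n => g ⟨⋃ i, f i, MeasurableSet.iUnion h⟩ - g ⟨U n, hUm n⟩ := by
        funext n; rw [hpartial n]; ring
      rw [this]
      simpa using tendsto_const_nhds.sub hgtail
    have hHasSum : HasSum G (g ⟨⋃ i, f i, MeasurableSet.iUnion h⟩) :=
      (hasSum_iff_tendsto_nat_of_nonneg (fun i => h0 _) _).2 hsum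
    rw [← hHasSum.tsum_eq, ENNReal.ofReal_tsum_of_nonneg (fun i => h0 _) hHasSum.summable]
  set m : (s : Set α) → MeasurableSet s → ℝ≥0∞ := fun s hs => ENNReal.ofReal (g ⟨s, hs⟩) with hm
  have hm0 : m ∅ MeasurableSet.empty = 0 := by
    show ENNReal.ofReal (g ⟨∅, MeasurableSet.empty⟩) = 0; rw [hg0, ENNReal.ofReal_zero]
  refine ⟨Measure.ofMeasurable m hm0 (fun f h hpd => hcadd h hpd), ?_, ?_⟩
  · rw [Measure.le_iff]
    intro s hs
    rw [Measure.ofMeasurable_apply s hs]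
    calc ENNReal.ofReal (g ⟨s, hs⟩) ≤ ENNReal.ofReal ((ψ s).toReal) :=
          ENNReal.ofReal_le_ofReal (hle _)
      _ = ψ s := ENNReal.ofReal_toReal (measure_ne_top _ _)
  · intro S
    rw [Measure.ofMeasurable_apply S.1 S.2, ENNReal.toReal_ofReal (h0 _)]

-- volume computation helper
lemma vol_Ico_inter_Ioi {a b : ℝ} (ha : 0 ≤ a) :
    (volume (Ico a b ∩ Ioi 0)) = ENNReal.ofReal (b - a) := by
  rcases le_or_gt b a with hba | hab
  · rw [Ico_eq_empty (by exact not_lt.2 hba), empty_inter, measure_empty]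
    symm; simpa using sub_nonpos.2 hba
  · rcases eq_or_lt_of_le ha with rfl | ha'
    · have : Ico (0:ℝ) b ∩ Ioi 0 = Ioo 0 b := by
        ext x; simp only [mem_inter_iff, mem_Ico, mem_Ioi, mem_Ioo]
        constructor
        · rintro ⟨⟨_, h2⟩, h3⟩; exact ⟨h3, h2⟩
        · rintro ⟨h1, h2⟩; exact ⟨⟨le_of_lt h1, h2⟩, h1⟩
      rw [this, Real.volume_Ioo, sub_zero]
    · have : Ico a b ∩ Ioi 0 = Ico a b := by
        rw [inter_eq_left]; intro x hx; exact lt_of_lt_of_le ha' hx.1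
      rw [this, Real.volume_Ico]

lemma cut_integral_ineq {J : Type*} [MeasurableSpace J]
    (ψ : Measure (J × J)) [IsFiniteMeasure ψ]
    (σ τ : Measure J) [IsFiniteMeasure σ] [IsFiniteMeasure τ]
    (hστ : σ univ = τ univ)
    (hcut : ∀ S : Set J, MeasurableSet S →
      (σ S).toReal - (τ S).toReal ≤ (ψ (S ×ˢ Sᶜ)).toReal)
    (f : J → ℝ) (hf : Measurable f) (C : ℝ) (hbd : ∀ x, |f x| ≤ C) :
    ∫ x, f x ∂σ - ∫ x, f x ∂τ ≤ ∫ p : J × J, max (f p.1 - f p.2) 0 ∂ψ := by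
  classical
  set g : J → ℝ := fun x => f x + C with hgdef
  have hgm : Measurable g := hf.add_const C
  have hg0 : ∀ x, 0 ≤ g x := fun x => by
    have := (abs_le.1 (hbd x)).1; simp only [hgdef]; linarith
  have hg2C : ∀ x, g x ≤ 2 * C := fun x => by
    have := (abs_le.1 (hbd x)).2; simp only [hgdef]; linarith
  -- ENNReal core inequality
  have hσlayer : ∫⁻ x, ENNReal.ofReal (g x) ∂σ = ∫⁻ t in Ioi 0, σ {a | t < g a} :=
    lintegral_eq_lintegral_meas_lt σ (ae_of_all _ hg0) hgm.aemeasurable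
  have hτlayer : ∫⁻ x, ENNReal.ofReal (g x) ∂τ = ∫⁻ t in Ioi 0, τ {a | t < g a} :=
    lintegral_eq_lintegral_meas_lt τ (ae_of_all _ hg0) hgm.aemeasurable
  -- swap for ψ
  set W : ℝ → Set (J × J) := fun t => {a | t < g a} ×ˢ {a | t < g a}ᶜ with hWdef
  have hSm : ∀ t, MeasurableSet {a : J | t < g a} := fun t => measurableSet_lt measurable_const hgm
  have hWm : ∀ t, MeasurableSet (W t) := fun t => (hSm t).prod (hSm t).compl
  set F : ℝ → J × J → ℝ≥0∞ := fun t p =>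
    ({x : ℝ × (J × J) | x.1 < g x.2.1 ∧ g x.2.2 ≤ x.1}).indicator 1 (t, p) with hFdef
  have hSetm : MeasurableSet {x : ℝ × (J × J) | x.1 < g x.2.1 ∧ g x.2.2 ≤ x.1} := by
    exact (measurableSet_lt measurable_fst (hgm.comp (measurable_fst.comp measurable_snd))).inter
      (measurableSet_le (hgm.comp (measurable_snd.comp measurable_snd)) measurable_fst)
  have hFunc : Measurable (Function.uncurry F) := by
    have : Function.uncurry F
        = ({x : ℝ × (J × J) | x.1 < g x.2.1 ∧ g x.2.2 ≤ x.1}).indicator 1 := by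
      funext x; cases x; rfl
    rw [this]
    exact (measurable_one).indicator hSetm
  have hswap : ∫⁻ t in Ioi 0, ψ (W t)
      = ∫⁻ p : J × J, ENNReal.ofReal (g p.1 - g p.2) ∂ψ := by
    have h1 : ∀ t, ∫⁻ p, F t p ∂ψ = ψ (W t) := by
      intro t
      have : F t = (W t).indicator 1 := by
        funext p
        by_cases hp : p ∈ W t
        · have hp' : (t, p) ∈ {x : ℝ × (J × J) | x.1 < g x.2.1 ∧ g x.2.2 ≤ x.1} := by
            obtain ⟨h1, h2⟩ := hp
            exact ⟨h1, not_lt.1 h2⟩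
          simp [hFdef, indicator_of_mem hp', indicator_of_mem hp]
        · have hp' : (t, p) ∉ {x : ℝ × (J × J) | x.1 < g x.2.1 ∧ g x.2.2 ≤ x.1} := by
            intro hc
            exact hp ⟨hc.1, not_lt.2 hc.2⟩
          simp [hFdef, indicator_of_notMem hp', indicator_of_notMem hp]
      rw [this, lintegral_indicator_one (hWm t)]
    have h2 : ∀ p : J × J, ∫⁻ t in Ioi 0, F t p = ENNReal.ofReal (g p.1 - g p.2) := by
      intro p
      have hTs : {t : ℝ | t < g p.1 ∧ g p.2 ≤ t} = Ico (g p.2) (g p.1) := by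
        ext t; simp only [mem_setOf_eq, mem_Ico]; tauto
      have : (fun t => F t p) = ({t : ℝ | t < g p.1 ∧ g p.2 ≤ t}).indicator 1 := by
        funext t
        by_cases ht : t ∈ {t : ℝ | t < g p.1 ∧ g p.2 ≤ t}
        · have : (t, p) ∈ {x : ℝ × (J × J) | x.1 < g x.2.1 ∧ g x.2.2 ≤ x.1} := ht
          simp [hFdef, indicator_of_mem this, indicator_of_mem ht]
        · have : (t, p) ∉ {x : ℝ × (J × J) | x.1 < g x.2.1 ∧ g x.2.2 ≤ x.1} := ht
          simp [hFdef, indicator_of_notMem this, indicator_of_notMem ht]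
      rw [this, hTs, lintegral_indicator_one measurableSet_Ico,
        Measure.restrict_apply measurableSet_Ico]
      exact vol_Ico_inter_Ioi (hg0 p.2)
    calc ∫⁻ t in Ioi 0, ψ (W t) = ∫⁻ t in Ioi 0, ∫⁻ p, F t p ∂ψ := by
          refine lintegral_congr fun t => (h1 t).symm
      _ = ∫⁻ p : J × J, (∫⁻ t in Ioi 0, F t p) ∂ψ :=
          lintegral_lintegral_swap hFunc.aemeasurable
      _ = ∫⁻ p : J × J, ENNReal.ofReal (g p.1 - g p.2) ∂ψ :=
          lintegral_congr fun p => h2 p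
  -- pointwise cut inequality in ℝ≥0∞
  have hcut' : ∀ S : Set J, MeasurableSet S → σ S ≤ τ S + ψ (S ×ˢ Sᶜ) := by
    intro S hS
    have h := hcut S hS
    have hfin1 : σ S ≠ ⊤ := measure_ne_top _ _
    rw [← ENNReal.ofReal_toReal hfin1]
    calc ENNReal.ofReal ((σ S).toReal)
        ≤ ENNReal.ofReal ((τ S).toReal + (ψ (S ×ˢ Sᶜ)).toReal) :=
          ENNReal.ofReal_le_ofReal (by linarith)
      _ ≤ ENNReal.ofReal ((τ S).toReal) + ENNReal.ofReal ((ψ (S ×ˢ Sᶜ)).toReal) :=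
          ENNReal.ofReal_add_le
      _ = τ S + ψ (S ×ˢ Sᶜ) := by
          rw [ENNReal.ofReal_toReal (measure_ne_top _ _),
            ENNReal.ofReal_toReal (measure_ne_top _ _)]
  have hτmeas : Measurable (fun t : ℝ => τ {a | t < g a}) := by
    refine Antitone.measurable fun s t hst => ?_
    exact measure_mono fun a ha => lt_of_le_of_lt hst ha
  have hcore : ∫⁻ x, ENNReal.ofReal (g x) ∂σ
      ≤ ∫⁻ x, ENNReal.ofReal (g x) ∂τ + ∫⁻ p : J × J, ENNReal.ofReal (g p.1 - g p.2) ∂ψ := by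
    rw [hσlayer, hτlayer, ← hswap, ← lintegral_add_left (by exact hτmeas)]
    exact lintegral_mono fun t => hcut' _ (hSm t)
  -- finiteness
  have hfinσ : ∫⁻ x, ENNReal.ofReal (g x) ∂σ ≠ ⊤ := by
    refine ne_of_lt (lt_of_le_of_lt (lintegral_mono fun x =>
      ENNReal.ofReal_le_ofReal (hg2C x)) ?_)
    rw [lintegral_const]
    exact ENNReal.mul_lt_top ENNReal.ofReal_lt_top (measure_lt_top _ _)
  have hfinτ : ∫⁻ x, ENNReal.ofReal (g x) ∂τ ≠ ⊤ := by
    refine ne_of_lt (lt_of_le_of_lt (lintegral_mono fun x =>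
      ENNReal.ofReal_le_ofReal (hg2C x)) ?_)
    rw [lintegral_const]
    exact ENNReal.mul_lt_top ENNReal.ofReal_lt_top (measure_lt_top _ _)
  have hfinψ : ∫⁻ p : J × J, ENNReal.ofReal (g p.1 - g p.2) ∂ψ ≠ ⊤ := by
    refine ne_of_lt (lt_of_le_of_lt (lintegral_mono fun p =>
      ENNReal.ofReal_le_ofReal (q := 2 * C) ?_) ?_)
    · have h1 := hg0 p.2; have h2 := hg2C p.1; linarith
    · rw [lintegral_const]
      exact ENNReal.mul_lt_top ENNReal.ofReal_lt_top (measure_lt_top _ _)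
  -- convert to real integrals
  have hgσ : ∫ x, g x ∂σ = (∫⁻ x, ENNReal.ofReal (g x) ∂σ).toReal :=
    integral_eq_lintegral_of_nonneg_ae (ae_of_all _ hg0) hgm.aestronglyMeasurable
  have hgτ : ∫ x, g x ∂τ = (∫⁻ x, ENNReal.ofReal (g x) ∂τ).toReal :=
    integral_eq_lintegral_of_nonneg_ae (ae_of_all _ hg0) hgm.aestronglyMeasurable
  have hmaxeq : ∫ p : J × J, max (f p.1 - f p.2) 0 ∂ψ
      = (∫⁻ p : J × J, ENNReal.ofReal (g p.1 - g p.2) ∂ψ).toReal := by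
    have h1 : ∫ p : J × J, max (f p.1 - f p.2) 0 ∂ψ
        = (∫⁻ p : J × J, ENNReal.ofReal (max (f p.1 - f p.2) 0) ∂ψ).toReal :=
      integral_eq_lintegral_of_nonneg_ae (ae_of_all _ fun p => le_max_right _ _)
        (((hf.comp measurable_fst).sub (hf.comp measurable_snd)).max
          measurable_const).aestronglyMeasurable
    rw [h1]
    congr 1
    refine lintegral_congr fun p => ?_
    have : g p.1 - g p.2 = f p.1 - f p.2 := by simp [hgdef]
    rw [this]
    rcases le_total (f p.1 - f p.2) 0 with h | h
    · rw [max_eq_right h, ENNReal.ofReal_zero, ENNReal.ofReal_eq_zero.2 h]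
    · rw [max_eq_left h]
  have hrealcore : ∫ x, g x ∂σ ≤ ∫ x, g x ∂τ + ∫ p : J × J, max (f p.1 - f p.2) 0 ∂ψ := by
    rw [hgσ, hgτ, hmaxeq, ← ENNReal.toReal_add hfinτ hfinψ]
    exact ENNReal.toReal_mono (by exact ENNReal.add_ne_top.2 ⟨hfinτ, hfinψ⟩) hcore
  -- relate ∫ g to ∫ f
  have hintf : ∀ (μ : Measure J) [IsFiniteMeasure μ],
      ∫ x, g x ∂μ = ∫ x, f x ∂μ + C * (μ univ).toReal := by
    intro μ hμ
    have hint : Integrable f μ :=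
      ⟨hf.aestronglyMeasurable, HasFiniteIntegral.of_bounded (C := C) (ae_of_all _ hbd)⟩
    rw [hgdef]
    simp only []
    rw [integral_add hint (integrable_const C), integral_const, smul_eq_mul]
    simp only [measureReal_def]
    ring
  have h1 := hintf σ
  have h2 := hintf τ
  have huniv : (σ univ).toReal = (τ univ).toReal := by rw [hστ]
  rw [h1, h2, huniv] at hrealcore
  linarith

/-- **Supply-Demand Theorem for measures.** Given a finite capacity measure `ψ` on `J × J`
and finite nonnegative measures `σ, τ` on `J` with `σ(J) = τ(J)`, there is a feasible
`σ`-`τ` flow (a finite nonnegative measure `φ ≤ ψ` with `φ¹ - φ² = σ - τ`) iff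
`ψ(S × Sᶜ) ≥ σ(S) - τ(S)` for every Borel set `S`. -/
theorem stmt_6 {J : Type*} [MeasurableSpace J] [StandardBorelSpace J]
    (ψ : Measure (J × J)) [IsFiniteMeasure ψ]
    (σ τ : Measure J) [IsFiniteMeasure σ] [IsFiniteMeasure τ]
    (hστ : σ univ = τ univ) :
    (∃ φ : Measure (J × J), IsFiniteMeasure φ ∧ φ.fst + τ = φ.snd + σ ∧ φ ≤ ψ) ↔
      (∀ S : Set J, MeasurableSet S →
        (σ S).toReal - (τ S).toReal ≤ (ψ (S ×ˢ Sᶜ)).toReal) := by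
  classical
  constructor
  · rintro ⟨φ, hfin, heq, hle⟩ S hS
    haveI := hfin
    have hfstS : φ.fst S = φ (S ×ˢ (univ : Set J)) := by
      rw [Measure.fst_apply hS]; congr 1; ext q; simp [Set.mem_prod]
    have hsndS : φ.snd S = φ ((univ : Set J) ×ˢ S) := by
      rw [Measure.snd_apply hS]; congr 1; ext q; simp [Set.mem_prod]
    have heqS : φ (S ×ˢ (univ : Set J)) + τ S = φ ((univ : Set J) ×ˢ S) + σ S := by
      have := congrArg (fun μ : Measure J => μ S) heq
      simpa [Measure.add_apply, hfstS, hsndS] using this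
    have hdecomp1 : φ (S ×ˢ (univ : Set J)) = φ (S ×ˢ S) + φ (S ×ˢ Sᶜ) := by
      rw [← measure_union ?_ (hS.prod hS.compl)]
      · congr 1; ext q
        by_cases h : q.2 ∈ S <;> simp [Set.mem_prod, h]
      · exact Set.disjoint_left.2 (by rintro ⟨a, b⟩ ⟨_, hb⟩ ⟨_, hb'⟩; exact hb' hb)
    have hdecomp2 : φ ((univ : Set J) ×ˢ S) = φ (S ×ˢ S) + φ (Sᶜ ×ˢ S) := by
      rw [← measure_union ?_ (hS.compl.prod hS)]
      · congr 1; ext q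
        by_cases h : q.1 ∈ S <;> simp [Set.mem_prod, h]
      · exact Set.disjoint_left.2 (by rintro ⟨a, b⟩ ⟨ha, _⟩ ⟨ha', _⟩; exact ha' ha)
    have h1 : (φ (S ×ˢ (univ : Set J)) + τ S).toReal = (φ ((univ : Set J) ×ˢ S) + σ S).toReal := by
      rw [heqS]
    rw [ENNReal.toReal_add (measure_ne_top _ _) (measure_ne_top _ _),
      ENNReal.toReal_add (measure_ne_top _ _) (measure_ne_top _ _)] at h1
    have h2 : (φ (S ×ˢ (univ : Set J))).toReal = (φ (S ×ˢ S)).toReal + (φ (S ×ˢ Sᶜ)).toReal := by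
      rw [hdecomp1, ENNReal.toReal_add (measure_ne_top _ _) (measure_ne_top _ _)]
    have h3 : (φ ((univ : Set J) ×ˢ S)).toReal = (φ (S ×ˢ S)).toReal + (φ (Sᶜ ×ˢ S)).toReal := by
      rw [hdecomp2, ENNReal.toReal_add (measure_ne_top _ _) (measure_ne_top _ _)]
    have h4 : (φ (S ×ˢ Sᶜ)).toReal ≤ (ψ (S ×ˢ Sᶜ)).toReal :=
      ENNReal.toReal_mono (measure_ne_top _ _) (Measure.le_iff'.1 hle _)
    have h5 : (0:ℝ) ≤ (φ (Sᶜ ×ˢ S)).toReal := ENNReal.toReal_nonneg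
    linarith
  · intro hcut
    -- Backward direction
    set p : {S : Set J // MeasurableSet S} → ℝ :=
      fun A => (σ A.1).toReal - (τ A.1).toReal with hpdef
    set K : Set ({S : Set (J × J) // MeasurableSet S} → ℝ) :=
      {g | (∀ S, 0 ≤ g S) ∧ (∀ S, g S ≤ (ψ S.1).toReal) ∧
        ∀ S T U : {S : Set (J × J) // MeasurableSet S},
          Disjoint S.1 T.1 → S.1 ∪ T.1 = U.1 → g U = g S + g T} with hKdef
    have hKmem : ∀ φ : Measure (J × J), φ ≤ ψ →
        (fun S : {S : Set (J × J) // MeasurableSet S} => (φ S.1).toReal) ∈ K := by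
      intro φ hφ
      have hne : ∀ s : Set (J × J), φ s ≠ ⊤ := fun s =>
        ne_of_lt (lt_of_le_of_lt (Measure.le_iff'.1 hφ s) (measure_lt_top _ _))
      refine ⟨fun S => ENNReal.toReal_nonneg, fun S =>
        ENNReal.toReal_mono (measure_ne_top _ _) (Measure.le_iff'.1 hφ S.1),
        fun S T U hd hu => ?_⟩
      have hμU : φ U.1 = φ S.1 + φ T.1 := by rw [← hu, measure_union hd T.2]
      show (φ U.1).toReal = (φ S.1).toReal + (φ T.1).toReal
      rw [hμU, ENNReal.toReal_add (hne _) (hne _)]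
    have hKcl : IsClosed K := by
      have hKeq : K = (⋂ S : {S : Set (J × J) // MeasurableSet S},
            {g : {S : Set (J × J) // MeasurableSet S} → ℝ | 0 ≤ g S}) ∩
          ((⋂ S : {S : Set (J × J) // MeasurableSet S}, {g | g S ≤ (ψ S.1).toReal}) ∩
           (⋂ S : {S : Set (J × J) // MeasurableSet S},
            ⋂ T : {S : Set (J × J) // MeasurableSet S},
            ⋂ U : {S : Set (J × J) // MeasurableSet S},
              {g | Disjoint S.1 T.1 → S.1 ∪ T.1 = U.1 → g U = g S + g T})) := by
        ext g
        simp only [hKdef, mem_setOf_eq, mem_inter_iff, mem_iInter]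
        try tauto
      rw [hKeq]
      refine IsClosed.inter (isClosed_iInter fun S =>
          isClosed_le continuous_const (continuous_apply S)) (IsClosed.inter
        (isClosed_iInter fun S => isClosed_le (continuous_apply S) continuous_const)
        (isClosed_iInter fun S => isClosed_iInter fun T => isClosed_iInter fun U => ?_))
      by_cases h1 : Disjoint S.1 T.1 ∧ S.1 ∪ T.1 = U.1
      · have : {g : {S : Set (J × J) // MeasurableSet S} → ℝ |
            Disjoint S.1 T.1 → S.1 ∪ T.1 = U.1 → g U = g S + g T} = {g | g U = g S + g T} := by
          ext g; simp [h1.1, h1.2]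
        rw [this]
        exact isClosed_eq (continuous_apply U) ((continuous_apply S).add (continuous_apply T))
      · have : {g : {S : Set (J × J) // MeasurableSet S} → ℝ |
            Disjoint S.1 T.1 → S.1 ∪ T.1 = U.1 → g U = g S + g T} = univ := by
          ext g
          simp only [mem_setOf_eq, mem_univ, iff_true]
          intro hd hu
          exact absurd ⟨hd, hu⟩ h1
        rw [this]
        exact isClosed_univ
    have hKcpt : IsCompact K := by
      refine IsCompact.of_isClosed_subset (isCompact_univ_pi
        (fun S : {S : Set (J × J) // MeasurableSet S} => isCompact_Icc
          (a := (0:ℝ)) (b := (ψ S.1).toReal))) hKcl ?_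
      intro g hg S _
      exact ⟨hg.1 S, hg.2.1 S⟩
    have hKcvx : Convex ℝ K := by
      intro g1 hg1 g2 hg2 a b ha hb hab
      refine ⟨fun S => ?_, fun S => ?_, fun S T U hd hu => ?_⟩
      · have h1 := hg1.1 S; have h2 := hg2.1 S
        simp only [Pi.add_apply, Pi.smul_apply, smul_eq_mul]
        nlinarith
      · have h1 := hg1.2.1 S; have h2 := hg2.2.1 S
        simp only [Pi.add_apply, Pi.smul_apply, smul_eq_mul]
        have e1 : a * g1 S ≤ a * (ψ S.1).toReal := mul_le_mul_of_nonneg_left h1 ha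
        have e2 : b * g2 S ≤ b * (ψ S.1).toReal := mul_le_mul_of_nonneg_left h2 hb
        have e3 : a * (ψ S.1).toReal + b * (ψ S.1).toReal = (ψ S.1).toReal := by
          rw [← add_mul, hab, one_mul]
        linarith
      · simp only [Pi.add_apply, Pi.smul_apply, smul_eq_mul]
        rw [hg1.2.2 S T U hd hu, hg2.2.2 S T U hd hu]
        ring
    set L : ({S : Set (J × J) // MeasurableSet S} → ℝ) → ({S : Set J // MeasurableSet S} → ℝ) :=
      fun g A => g ⟨A.1 ×ˢ (univ : Set J), A.2.prod MeasurableSet.univ⟩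
        - g ⟨(univ : Set J) ×ˢ A.1, MeasurableSet.univ.prod A.2⟩ with hLdef
    have hLcont : Continuous L :=
      continuous_pi fun A => (continuous_apply _).sub (continuous_apply _)
    set D : Set ({S : Set J // MeasurableSet S} → ℝ) := L '' K with hDdef
    have hDcpt : IsCompact D := hKcpt.image hLcont
    have hLlin : ∀ (a b : ℝ) (g1 g2 : {S : Set (J × J) // MeasurableSet S} → ℝ),
        L (a • g1 + b • g2) = a • L g1 + b • L g2 := by
      intro a b g1 g2
      funext A
      simp only [hLdef, Pi.add_apply, Pi.smul_apply, smul_eq_mul]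
      ring
    have hDcvx : Convex ℝ D := by
      rintro _ ⟨g1, hg1, rfl⟩ _ ⟨g2, hg2, rfl⟩ a b ha hb hab
      exact ⟨a • g1 + b • g2, hKcvx hg1 hg2 ha hb hab, hLlin a b g1 g2⟩
    -- main claim : p ∈ D
    have hpD : p ∈ D := by
      by_contra hp
      obtain ⟨I, u, hIu, hsub⟩ := (isOpen_pi_iff).1 hDcpt.isClosed.isOpen_compl p hp
      set r : ({S : Set J // MeasurableSet S} → ℝ) → (I → ℝ) := fun g i => g i.1 with hrdef
      have hrcont : Continuous r := continuous_pi fun i => continuous_apply _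
      set Cq : Set (I → ℝ) := r '' D with hCqdef
      have hq : r p ∉ Cq := by
        rintro ⟨d, hdD, hdq⟩
        have hdpi : d ∈ (↑I : Set _).pi u := by
          intro a ha
          have h1 : d a = p a := by
            have := congrFun hdq ⟨a, ha⟩
            exact this
          rw [h1]
          exact (hIu a ha).2
        exact hsub hdpi hdD
      have hCcpt : IsCompact Cq := hDcpt.image hrcont
      have hCcvx : Convex ℝ Cq := by
        rintro _ ⟨d1, hd1, rfl⟩ _ ⟨d2, hd2, rfl⟩ a b ha hb hab
        refine ⟨a • d1 + b • d2, hDcvx hd1 hd2 ha hb hab, ?_⟩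
        funext i
        simp only [hrdef, Pi.add_apply, Pi.smul_apply]
      obtain ⟨ℓ, u0, hqu, hCu⟩ := geometric_hahn_banach_point_closed hCcvx hCcpt.isClosed hq
      set c : I → ℝ := fun i => ℓ (fun j => if i = j then 1 else 0) with hcdef
      have hℓ : ∀ x : I → ℝ, ℓ x = ∑ i : I, x i * c i := by
        intro x
        have h := LinearMap.pi_apply_eq_sum_univ (ℓ : (I → ℝ) →ₗ[ℝ] ℝ) x
        simpa [hcdef, smul_eq_mul] using h
      set A : I → Set J := fun i => (i.1 : {S : Set J // MeasurableSet S}).1 with hAdef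
      have hA : ∀ i : I, MeasurableSet (A i) := fun i => i.1.2
      set b : I → ℝ := fun i => -c i with hbdef
      set f : J → ℝ := fun x => ∑ i : I, (A i).indicator (fun _ => b i) x with hfdef
      have hfm : Measurable f :=
        Finset.measurable_sum _ fun i _ => measurable_const.indicator (hA i)
      have hfb : ∀ x, |f x| ≤ ∑ i : I, |b i| := by
        intro x
        refine (Finset.abs_sum_le_sum_abs _ _).trans (Finset.sum_le_sum fun i _ => ?_)
        by_cases h : x ∈ A i <;> simp [Set.indicator_apply, h, abs_nonneg]
      -- integral identities
      have hIntInd : ∀ (μ : Measure J) [IsFiniteMeasure μ],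
          ∫ x, f x ∂μ = ∑ i : I, b i * (μ (A i)).toReal := by
        intro μ _
        rw [hfdef]
        rw [integral_finset_sum _ (fun i _ => (integrable_const (b i)).indicator (hA i))]
        refine Finset.sum_congr rfl fun i _ => ?_
        rw [integral_indicator_const (b i) (hA i), smul_eq_mul]
        simp only [measureReal_def]
        ring
      have hprodint : ∀ (ρ : Measure (J × J)) [IsFiniteMeasure ρ],
          ∫ q : J × J, (f q.1 - f q.2) ∂ρ
            = ∑ i : I, b i * ((ρ (A i ×ˢ (univ : Set J))).toReal
              - (ρ ((univ : Set J) ×ˢ A i)).toReal) := by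
        intro ρ _
        have hfe : (fun q : J × J => f q.1 - f q.2) = fun q : J × J => ∑ i : I,
            ((A i ×ˢ (univ : Set J)).indicator (fun _ => b i)
              - ((univ : Set J) ×ˢ A i).indicator (fun _ => b i)) q := by
          funext q
          rw [hfdef]
          simp only [Pi.sub_apply]
          rw [← Finset.sum_sub_distrib]
          refine Finset.sum_congr rfl fun i _ => ?_
          have e1 : (A i).indicator (fun _ => b i) q.1
              = (A i ×ˢ (univ : Set J)).indicator (fun _ => b i) q := by
            by_cases h : q.1 ∈ A i <;> simp [Set.indicator_apply, Set.mem_prod, h]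
          have e2 : (A i).indicator (fun _ => b i) q.2
              = ((univ : Set J) ×ˢ A i).indicator (fun _ => b i) q := by
            by_cases h : q.2 ∈ A i <;> simp [Set.indicator_apply, Set.mem_prod, h]
          rw [e1, e2]
        rw [hfe]
        rw [integral_finset_sum _ (fun i _ =>
          (((integrable_const (b i)).indicator ((hA i).prod MeasurableSet.univ)).sub
            ((integrable_const (b i)).indicator (MeasurableSet.univ.prod (hA i)))))]
        refine Finset.sum_congr rfl fun i _ => ?_
        simp only [Pi.sub_apply]
        rw [integral_sub ((integrable_const (b i)).indicator ((hA i).prod MeasurableSet.univ))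
          ((integrable_const (b i)).indicator (MeasurableSet.univ.prod (hA i))),
          integral_indicator_const (b i) ((hA i).prod MeasurableSet.univ),
          integral_indicator_const (b i) (MeasurableSet.univ.prod (hA i)),
          smul_eq_mul, smul_eq_mul]
        simp only [measureReal_def]
        ring
      -- the witness measure
      set W : Set (J × J) := {q : J × J | f q.2 < f q.1} with hWdef
      have hWm : MeasurableSet W :=
        measurableSet_lt (hfm.comp measurable_snd) (hfm.comp measurable_fst)
      set φs : Measure (J × J) := ψ.restrict W with hφsdef
      haveI : IsFiniteMeasure φs := by
        rw [hφsdef]; infer_instance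
      have hφsK : (fun S : {S : Set (J × J) // MeasurableSet S} => (φs S.1).toReal) ∈ K :=
        hKmem φs Measure.restrict_le_self
      have hin : r (L (fun S : {S : Set (J × J) // MeasurableSet S} => (φs S.1).toReal)) ∈ Cq :=
        ⟨_, ⟨_, hφsK, rfl⟩, rfl⟩
      have hceil := hCu _ hin
      -- evaluate the functional
      have hℓp : ℓ (r p) = ∑ i : I, ((σ (A i)).toReal - (τ (A i)).toReal) * c i := by
        rw [hℓ]
      have hℓφ : ℓ (r (L (fun S : {S : Set (J × J) // MeasurableSet S} => (φs S.1).toReal)))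
          = ∑ i : I, ((φs (A i ×ˢ (univ : Set J))).toReal
            - (φs ((univ : Set J) ×ˢ A i)).toReal) * c i := by
        rw [hℓ]
      -- key inequality
      have hkey := cut_integral_ineq ψ σ τ hστ hcut f hfm (∑ i : I, |b i|) hfb
      have hmax : ∫ q : J × J, max (f q.1 - f q.2) 0 ∂ψ = ∫ q : J × J, (f q.1 - f q.2) ∂φs := by
        have hind : (fun q : J × J => max (f q.1 - f q.2) 0)
            = W.indicator (fun q => f q.1 - f q.2) := by
          funext q
          by_cases hq : q ∈ W
          · rw [indicator_of_mem hq, max_eq_left]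
            have : f q.2 < f q.1 := hq
            linarith
          · rw [indicator_of_notMem hq, max_eq_right]
            have : ¬ f q.2 < f q.1 := hq
            linarith
        rw [hind, integral_indicator hWm, hφsdef]
      have hsσ : ∫ x, f x ∂σ - ∫ x, f x ∂τ = - ℓ (r p) := by
        rw [hIntInd σ, hIntInd τ, hℓp, ← Finset.sum_sub_distrib, ← Finset.sum_neg_distrib]
        refine Finset.sum_congr rfl fun i _ => ?_
        rw [hbdef]
        ring
      have hsφ : ∫ q : J × J, (f q.1 - f q.2) ∂φs
          = - ℓ (r (L (fun S : {S : Set (J × J) // MeasurableSet S} => (φs S.1).toReal))) := by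
        rw [hprodint φs, hℓφ, ← Finset.sum_neg_distrib]
        refine Finset.sum_congr rfl fun i _ => ?_
        rw [hbdef]
        ring
      rw [hmax, hsσ, hsφ] at hkey
      linarith
    -- extract the flow
    obtain ⟨g, hgK, hgL⟩ := hpD
    obtain ⟨φ, hφψ, hφval⟩ := measure_of_additive ψ g hgK.1 hgK.2.1 hgK.2.2
    haveI hφfin : IsFiniteMeasure φ :=
      ⟨lt_of_le_of_lt (Measure.le_iff'.1 hφψ univ) (measure_lt_top _ _)⟩
    refine ⟨φ, hφfin, ?_, hφψ⟩
    refine Measure.ext fun s hs => ?_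
    have hDs : (σ s).toReal - (τ s).toReal
        = (φ (s ×ˢ (univ : Set J))).toReal - (φ ((univ : Set J) ×ˢ s)).toReal := by
      have := congrFun hgL ⟨s, hs⟩
      rw [hLdef] at this
      simp only at this
      rw [hφval ⟨s ×ˢ (univ : Set J), hs.prod MeasurableSet.univ⟩,
        hφval ⟨(univ : Set J) ×ˢ s, MeasurableSet.univ.prod hs⟩] at this
      rw [hpdef] at this
      exact this.symm
    have hfsts : φ.fst s = φ (s ×ˢ (univ : Set J)) := by
      rw [Measure.fst_apply hs]; congr 1; ext q; simp [Set.mem_prod]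
    have hsnds : φ.snd s = φ ((univ : Set J) ×ˢ s) := by
      rw [Measure.snd_apply hs]; congr 1; ext q; simp [Set.mem_prod]
    have hfin4 : (φ.fst s + τ s) ≠ ⊤ := by
      haveI : IsFiniteMeasure φ.fst := by infer_instance
      exact ENNReal.add_ne_top.2 ⟨measure_ne_top _ _, measure_ne_top _ _⟩
    have hfin5 : (φ.snd s + σ s) ≠ ⊤ := by
      haveI : IsFiniteMeasure φ.snd := by infer_instance
      exact ENNReal.add_ne_top.2 ⟨measure_ne_top _ _, measure_ne_top _ _⟩
    have htoReal : (φ.fst s + τ s).toReal = (φ.snd s + σ s).toReal := by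
      haveI : IsFiniteMeasure φ.fst := by infer_instance
      haveI : IsFiniteMeasure φ.snd := by infer_instance
      rw [ENNReal.toReal_add (measure_ne_top _ _) (measure_ne_top _ _),
        ENNReal.toReal_add (measure_ne_top _ _) (measure_ne_top _ _),
        hfsts, hsnds]
      linarith
    have := (ENNReal.toReal_eq_toReal_iff' hfin4 hfin5).1 htoReal
    simpa [Measure.add_apply] using this
end

section
/- Let (J, 𝒜) be a standard Borel space, let v : J × J → ℝ be a bounded nonnegative Borel measurable cost function, let ψ be a finite nonnegative Borel measure on J × J (the capacity), and let σ, τ be finite nonnegative Borel measures on J with σ(J) = τ(J). There exists a σ-τ flow φ with φ ≤ ψ and ∫ v dφ = 1 if and only if for every bounded Borel measurable f : J → ℝ and every b ∈ {−1, 0, 1} one has ∫ (f(y) − f(x) + b·v(x,y))₊ dψ(x,y) ≥ ∫ f dτ − ∫ f dσ + b, where g₊ denotes the positive part of the function g. -/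
set_option maxHeartbeats 1000000

open MeasureTheory Set Filter Topology ENNReal

section MinFlowAux
open MeasureTheory Set Filter Topology ENNReal

noncomputable def ulim (U : Ultrafilter ℕ) (f : ℕ → ℝ≥0∞) : ℝ≥0∞ := (U.map f).lim

lemma tendsto_ulim (U : Ultrafilter ℕ) (f : ℕ → ℝ≥0∞) : Tendsto f ↑U (𝓝 (ulim U f)) := by
  have h := (U.map f).le_nhds_lim
  rwa [Tendsto, ← Ultrafilter.coe_map]

lemma ulim_eq {U : Ultrafilter ℕ} {f : ℕ → ℝ≥0∞} {a : ℝ≥0∞} (h : Tendsto f ↑U (𝓝 a)) :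
    ulim U f = a := tendsto_nhds_unique (tendsto_ulim U f) h

lemma ulim_le {U : Ultrafilter ℕ} {f : ℕ → ℝ≥0∞} {a : ℝ≥0∞} (h : ∀ n, f n ≤ a) :
    ulim U f ≤ a := le_of_tendsto (tendsto_ulim U f) (Eventually.of_forall h)

lemma ulim_mono {U : Ultrafilter ℕ} {f g : ℕ → ℝ≥0∞} (h : ∀ n, f n ≤ g n) :
    ulim U f ≤ ulim U g :=
  le_of_tendsto_of_tendsto' (tendsto_ulim U f) (tendsto_ulim U g) h

variable {X : Type*} [MeasurableSpace X]


lemma ulim_countably_additive (U : Ultrafilter ℕ) (φ : ℕ → Measure X) (ψ : Measure X)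
    [IsFiniteMeasure ψ] (hle : ∀ n, φ n ≤ ψ) (f : ℕ → Set X) (hf : ∀ i, MeasurableSet (f i))
    (hd : Pairwise (Function.onFun Disjoint f)) :
    (ulim U fun n => φ n (⋃ i, f i)) = ∑' i, ulim U fun n => φ n (f i) := by
      -- countable additivity
      apply le_antisymm
      · -- ≤ : use tails controlled by ψ
        have tail_meas : ∀ N : ℕ, MeasurableSet (⋃ i, f (i + N)) := fun N =>
          MeasurableSet.iUnion fun i => hf _
        have tail_tendsto : Tendsto (fun N => ψ (⋃ i, f (i + N))) atTop (𝓝 0) := by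
          have h0 : ψ (⋂ N, ⋃ i, f (i + N)) = 0 := by
            have : (⋂ N, ⋃ i, f (i + N)) = ∅ := by
              ext x
              simp only [mem_iInter, mem_iUnion, mem_empty_iff_false, iff_false, not_forall]
              by_contra hx
              push_neg at hx
              obtain ⟨i0, hi0⟩ := hx 0
              obtain ⟨i1, hi1⟩ := hx (i0 + 1)
              have : i0 ≠ i1 + (i0 + 1) := by omega
              exact (hd this).le_bot ⟨by simpa using hi0, hi1⟩
            simp [this]
          have hanti : Antitone fun N => ⋃ i, f (i + N) := by
            intro a b hab
            refine iUnion_subset fun i => ?_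
            exact subset_iUnion_of_subset (i + b - a) (by rw [show i + b - a + a = i + b by omega])
          have := tendsto_measure_iInter_atTop (μ := ψ) (fun N => (tail_meas N).nullMeasurableSet)
            hanti ⟨0, measure_ne_top _ _⟩
          rwa [h0] at this
        refine le_of_tendsto_of_tendsto'
            (f := fun _ : ℕ => ulim U fun n => φ n (⋃ i, f i))
            (g := fun N : ℕ => (∑ i ∈ Finset.range N, ulim U fun n => φ n (f i)) +
              ψ (⋃ i, f (i + N)))
              (b := atTop) tendsto_const_nhds ?_ ?_
        · have h1 : Tendsto (fun N => ∑ i ∈ Finset.range N, ulim U fun n => φ n (f i)) atTop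
              (𝓝 (∑' i, ulim U fun n => φ n (f i))) := ENNReal.tendsto_nat_tsum _
          have := Tendsto.add h1 tail_tendsto
          simpa using this
        · intro N
          have step1 : (ulim U fun n => φ n (⋃ i, f i)) ≤
              ulim U (fun n => (∑ i ∈ Finset.range N, φ n (f i)) + ψ (⋃ i, f (i + N))) := by
            refine ulim_mono fun n => ?_
            have hsplit : (⋃ i, f i) = (⋃ i ∈ Finset.range N, f i) ∪ ⋃ i, f (i + N) := by
              ext x
              simp only [mem_iUnion, Finset.mem_range, mem_union, exists_prop]
              constructor
              · rintro ⟨i, hi⟩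
                rcases lt_or_ge i N with h | h
                · exact Or.inl ⟨i, h, hi⟩
                · exact Or.inr ⟨i - N, by rwa [Nat.sub_add_cancel h]⟩
              · rintro (⟨i, _, hi⟩ | ⟨i, hi⟩)
                exacts [⟨i, hi⟩, ⟨i + N, hi⟩]
            have hdisj : Disjoint (⋃ i ∈ Finset.range N, f i) (⋃ i, f (i + N)) := by
              refine disjoint_iUnion₂_left.2 fun i hi => disjoint_iUnion_right.2 fun j => ?_
              exact hd (by simp at hi; omega)
            rw [hsplit, measure_union hdisj (MeasurableSet.iUnion fun i => hf _),
              measure_biUnion_finset (fun i _ j _ hij => hd hij) fun i _ => hf i]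
            exact add_le_add_right (hle n _) _
          have step2 : ulim U (fun n => (∑ i ∈ Finset.range N, φ n (f i)) + ψ (⋃ i, f (i + N)))
              = (∑ i ∈ Finset.range N, ulim U fun n => φ n (f i)) + ψ (⋃ i, f (i + N)) := by
            refine ulim_eq (Tendsto.add ?_ tendsto_const_nhds)
            exact tendsto_finset_sum _ fun i _ => tendsto_ulim U _
          exact step1.trans (le_of_eq step2)
      · -- ≥
        refine Summable.tsum_le_of_sum_le ENNReal.summable fun s => ?_
        have h1 : Tendsto (fun n => ∑ i ∈ s, φ n (f i)) ↑U
            (𝓝 (∑ i ∈ s, ulim U fun n => φ n (f i))) :=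
          tendsto_finset_sum _ fun i _ => tendsto_ulim U _
        rw [← ulim_eq h1]
        refine ulim_mono fun n => ?_
        rw [← measure_biUnion_finset (fun i _ j _ hij => hd hij) fun i _ => hf i]
        exact measure_mono (iUnion₂_subset fun i _ => subset_iUnion f i)

/-- The ultrafilter limit of a sequence of measures dominated by a finite measure `ψ`. -/
noncomputable def limitMeasure (U : Ultrafilter ℕ) (φ : ℕ → Measure X) (ψ : Measure X)
    [IsFiniteMeasure ψ] (hle : ∀ n, φ n ≤ ψ) : Measure X :=
  Measure.ofMeasurable (fun A _ => ulim U (fun n => φ n A))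
    (ulim_eq (by simpa using (tendsto_const_nhds : Tendsto (fun _ : ℕ => (0:ℝ≥0∞)) ↑U _)))
    (fun f hf hd => ulim_countably_additive U φ ψ hle f hf hd)

lemma limitMeasure_apply (U : Ultrafilter ℕ) (φ : ℕ → Measure X) (ψ : Measure X)
    [IsFiniteMeasure ψ] (hle : ∀ n, φ n ≤ ψ) {A : Set X} (hA : MeasurableSet A) :
    limitMeasure U φ ψ hle A = ulim U (fun n => φ n A) :=
  Measure.ofMeasurable_apply A hA

lemma limitMeasure_tendsto (U : Ultrafilter ℕ) (φ : ℕ → Measure X) (ψ : Measure X)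
    [IsFiniteMeasure ψ] (hle : ∀ n, φ n ≤ ψ) {A : Set X} (hA : MeasurableSet A) :
    Tendsto (fun n => φ n A) ↑U (𝓝 (limitMeasure U φ ψ hle A)) := by
  rw [limitMeasure_apply U φ ψ hle hA]; exact tendsto_ulim U _

lemma limitMeasure_le (U : Ultrafilter ℕ) (φ : ℕ → Measure X) (ψ : Measure X)
    [IsFiniteMeasure ψ] (hle : ∀ n, φ n ≤ ψ) : limitMeasure U φ ψ hle ≤ ψ := by
  refine Measure.le_iff.2 fun A hA => ?_
  rw [limitMeasure_apply U φ ψ hle hA]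
  exact ulim_le fun n => hle n A

lemma integrable_of_bdd {ν : Measure X} [IsFiniteMeasure ν] {h : X → ℝ} {C : ℝ}
    (hm : Measurable h) (hC : ∀ x, |h x| ≤ C) : Integrable h ν :=
  ⟨hm.aestronglyMeasurable,
    HasFiniteIntegral.of_bounded (C := C) (ae_of_all _ fun x => by simpa using hC x)⟩

section StepApprox

variable {h : X → ℝ} {C ε : ℝ}

/-- the level set of the discretization -/
private def lev (h : X → ℝ) (ε : ℝ) (k : ℤ) : Set X := {x | ⌊h x / ε⌋ = k}

private lemma lev_meas (hm : Measurable h) (ε : ℝ) (k : ℤ) : MeasurableSet (lev h ε k) :=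
  ((hm.div_const ε).floor) (measurableSet_singleton k)

/-- the discretized step function -/
private noncomputable def stepf (h : X → ℝ) (C ε : ℝ) : X → ℝ := fun x =>
  ∑ k ∈ Finset.Icc ⌊-C / ε⌋ ⌊C / ε⌋, (lev h ε k).indicator (fun _ => (k : ℝ) * ε) x

private lemma stepf_eq (hC : ∀ x, |h x| ≤ C) (hε : 0 < ε) (x : X) :
    stepf h C ε x = (⌊h x / ε⌋ : ℝ) * ε := by
  have hmem : ⌊h x / ε⌋ ∈ Finset.Icc ⌊-C / ε⌋ ⌊C / ε⌋ := by
    rw [Finset.mem_Icc]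
    constructor <;> apply Int.floor_le_floor <;>
      [exact div_le_div_of_nonneg_right (neg_le_of_abs_le (hC x)) hε.le;
       exact div_le_div_of_nonneg_right (le_of_abs_le (hC x)) hε.le]
  unfold stepf
  rw [Finset.sum_eq_single_of_mem _ hmem]
  · simp [lev, indicator_of_mem, mem_setOf_eq]
  · intro k _ hk
    simp only [indicator_apply_eq_zero, lev, mem_setOf_eq]
    intro hx; exact absurd hx.symm (by simpa using hk)

private lemma stepf_close (hC : ∀ x, |h x| ≤ C) (hε : 0 < ε) (x : X) :
    |stepf h C ε x - h x| ≤ ε := by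
  rw [stepf_eq hC hε x]
  have h1 : h x = h x / ε * ε := by field_simp
  rw [abs_le]
  constructor
  · nlinarith [Int.sub_one_lt_floor (h x / ε), Int.floor_le (h x / ε)]
  · nlinarith [Int.sub_one_lt_floor (h x / ε), Int.floor_le (h x / ε)]

private lemma stepf_bdd (hC : ∀ x, |h x| ≤ C) (hε : 0 < ε) (x : X) :
    |stepf h C ε x| ≤ |C| + ε := by
  have := stepf_close hC hε x
  have h2 := hC x
  calc |stepf h C ε x| = |h x + (stepf h C ε x - h x)| := by ring_nf
    _ ≤ |h x| + |stepf h C ε x - h x| := abs_add_le _ _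
    _ ≤ |C| + ε := add_le_add ((hC x).trans (le_abs_self C)) this

private lemma stepf_meas (hm : Measurable h) : Measurable (stepf h C ε) :=
  Finset.measurable_sum _ fun k _ =>
    (measurable_const.indicator (lev_meas hm ε k))

private lemma integral_stepf (hm : Measurable h) (ν : Measure X) [IsFiniteMeasure ν] :
    ∫ x, stepf h C ε x ∂ν =
      ∑ k ∈ Finset.Icc ⌊-C / ε⌋ ⌊C / ε⌋, (ν (lev h ε k)).toReal * ((k : ℝ) * ε) := by
  unfold stepf
  rw [integral_finset_sum]
  · exact Finset.sum_congr rfl fun k _ => by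
      rw [integral_indicator_const _ (lev_meas hm ε k)]; simp [smul_eq_mul, measureReal_def]
  · intro k _
    exact (integrable_const _).indicator (lev_meas hm ε k)

end StepApprox


lemma integral_diff_stepf_le {ν : Measure X} {ψ : Measure X} [IsFiniteMeasure ψ]
    (hνψ : ν ≤ ψ) {h : X → ℝ} {C ε : ℝ} (hm : Measurable h) (hC : ∀ x, |h x| ≤ C)
    (hε : 0 < ε) :
    |∫ x, h x ∂ν - ∫ x, stepf h C ε x ∂ν| ≤ ε * (ψ univ).toReal := by
  haveI : IsFiniteMeasure ν := isFiniteMeasure_of_le ψ hνψ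
  have hint : Integrable h ν := integrable_of_bdd hm hC
  have hints : Integrable (stepf h C ε) ν :=
    integrable_of_bdd (stepf_meas hm) (stepf_bdd hC hε)
  rw [← integral_sub hint hints]
  calc |∫ x, (h x - stepf h C ε x) ∂ν| ≤ ε * (ν univ).toReal := by
        rw [← Real.norm_eq_abs]
        refine norm_integral_le_of_norm_le_const (μ := ν) (C := ε) (ae_of_all _ fun x => ?_)
        rw [Real.norm_eq_abs, abs_sub_comm]; exact stepf_close hC hε x
    _ ≤ ε * (ψ univ).toReal := by
        have := ENNReal.toReal_mono (measure_ne_top ψ univ) (hνψ univ)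
        nlinarith

lemma limitMeasure_integral_tendsto (U : Ultrafilter ℕ) (φ : ℕ → Measure X) (ψ : Measure X)
    [IsFiniteMeasure ψ] (hle : ∀ n, φ n ≤ ψ) {h : X → ℝ} {C : ℝ}
    (hm : Measurable h) (hC : ∀ x, |h x| ≤ C) :
    Tendsto (fun n => ∫ x, h x ∂(φ n)) ↑U (𝓝 (∫ x, h x ∂(limitMeasure U φ ψ hle))) := by
  set μ := limitMeasure U φ ψ hle with hμ
  have hμle : μ ≤ ψ := limitMeasure_le U φ ψ hle
  rw [Metric.tendsto_nhds]
  intro δ hδ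
  set M : ℝ := (ψ univ).toReal + 1 with hM
  have hM0 : 0 < M := by positivity
  have hψM : (ψ univ).toReal < M := by simp [hM]
  set ε : ℝ := δ / (4 * M) with hε
  have hε0 : 0 < ε := by positivity
  -- convergence for the step function
  have hstep : Tendsto (fun n => ∫ x, stepf h C ε x ∂(φ n)) ↑U
      (𝓝 (∫ x, stepf h C ε x ∂μ)) := by
    haveI : IsFiniteMeasure μ := isFiniteMeasure_of_le ψ hμle
    haveI : ∀ n, IsFiniteMeasure (φ n) := fun n => isFiniteMeasure_of_le ψ (hle n)
    have : ∀ (ν : Measure X) [IsFiniteMeasure ν], ∫ x, stepf h C ε x ∂ν =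
        ∑ k ∈ Finset.Icc ⌊-C / ε⌋ ⌊C / ε⌋, (ν (lev h ε k)).toReal * ((k : ℝ) * ε) :=
      fun ν _ => integral_stepf hm ν
    rw [this μ]
    have h2 : ∀ n, ∫ x, stepf h C ε x ∂(φ n) =
        ∑ k ∈ Finset.Icc ⌊-C / ε⌋ ⌊C / ε⌋, ((φ n) (lev h ε k)).toReal * ((k : ℝ) * ε) :=
      fun n => integral_stepf hm (φ n)
    simp only [h2]
    refine tendsto_finset_sum _ fun k _ => Tendsto.mul_const _ ?_
    have htd : Tendsto (fun n => φ n (lev h ε k)) ↑U (𝓝 (μ (lev h ε k))) :=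
      limitMeasure_tendsto U φ ψ hle (lev_meas hm ε k)
    have hfin : μ (lev h ε k) ≠ ⊤ := measure_ne_top μ _
    exact (ENNReal.tendsto_toReal hfin).comp htd
  have hev : ∀ᶠ n in ↑U, |∫ x, stepf h C ε x ∂(φ n) - ∫ x, stepf h C ε x ∂μ| < δ / 4 := by
    have := Metric.tendsto_nhds.1 hstep (δ / 4) (by positivity)
    simpa [Real.dist_eq] using this
  filter_upwards [hev] with n hn
  have e1 : |∫ x, h x ∂(φ n) - ∫ x, stepf h C ε x ∂(φ n)| ≤ ε * (ψ univ).toReal :=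
    integral_diff_stepf_le (hle n) hm hC hε0
  have e3 : |∫ x, h x ∂μ - ∫ x, stepf h C ε x ∂μ| ≤ ε * (ψ univ).toReal :=
    integral_diff_stepf_le hμle hm hC hε0
  have hεψ : ε * (ψ univ).toReal < δ / 4 := by
    calc ε * (ψ univ).toReal < ε * M := by
          exact mul_lt_mul_of_pos_left hψM hε0
      _ = δ / 4 := by rw [hε, div_mul_eq_mul_div, mul_div_mul_right _ _ hM0.ne']
  rw [Real.dist_eq]
  calc |∫ x, h x ∂(φ n) - ∫ x, h x ∂μ| ≤
      |∫ x, h x ∂(φ n) - ∫ x, stepf h C ε x ∂(φ n)| +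
      |∫ x, stepf h C ε x ∂(φ n) - ∫ x, stepf h C ε x ∂μ| +
      |∫ x, h x ∂μ - ∫ x, stepf h C ε x ∂μ| := by
        rw [abs_sub_comm (∫ x, h x ∂μ)]
        have := abs_sub_le (∫ x, h x ∂(φ n)) (∫ x, stepf h C ε x ∂(φ n)) (∫ x, h x ∂μ)
        have h2 := abs_sub_le (∫ x, stepf h C ε x ∂(φ n)) (∫ x, stepf h C ε x ∂μ) (∫ x, h x ∂μ)
        linarith
    _ < ε * (ψ univ).toReal + δ / 4 + ε * (ψ univ).toReal := by
        exact add_lt_add_of_lt_of_le (add_lt_add_of_le_of_lt e1 hn) e3 |>.trans_le le_rfl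
    _ < δ := by linarith

lemma integral_max_eq_restrict {ψ : Measure X} [IsFiniteMeasure ψ] {G : X → ℝ} {C : ℝ}
    (hm : Measurable G) (hC : ∀ x, |G x| ≤ C) :
    ∫ x, G x ∂(ψ.restrict {x | 0 < G x}) = ∫ x, max (G x) 0 ∂ψ := by
  have hs : MeasurableSet {x | 0 < G x} := measurableSet_lt measurable_const hm
  have hint : Integrable (fun x => max (G x) 0) ψ := by
    refine integrable_of_bdd (hm.max measurable_const) (C := |C|) fun x => ?_
    rw [abs_of_nonneg (le_max_right _ _)]
    exact max_le ((le_abs_self _).trans ((hC x).trans (le_abs_self C))) (abs_nonneg C)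
  rw [← integral_add_compl hs hint]
  have h1 : ∫ x in {x | 0 < G x}, max (G x) 0 ∂ψ = ∫ x in {x | 0 < G x}, G x ∂ψ :=
    setIntegral_congr_fun hs fun x hx => max_eq_left (le_of_lt hx)
  have h2 : ∫ x in {x | 0 < G x}ᶜ, max (G x) 0 ∂ψ = 0 := by
    rw [setIntegral_congr_fun hs.compl (g := fun _ => (0:ℝ))
      (fun x hx => max_eq_right (not_lt.1 hx))]
    simp
  rw [h1, h2, add_zero]

lemma exists_measure_of_constraints {ψ : Measure X} [IsFiniteMeasure ψ] {d : ℕ}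
    (H : Fin d → X → ℝ) (C : ℝ) (hm : ∀ i, Measurable (H i)) (hb : ∀ i x, |H i x| ≤ C)
    (c : Fin d → ℝ)
    (hyp : ∀ a : Fin d → ℝ, ∑ i, a i * c i ≤ ∫ x, max (∑ i, a i * H i x) 0 ∂ψ) :
    ∃ φ : Measure X, φ ≤ ψ ∧ ∀ i, ∫ x, H i x ∂φ = c i := by
  set K : Set (Fin d → ℝ) := {y | ∃ φ : Measure X, φ ≤ ψ ∧ ∀ i, ∫ x, H i x ∂φ = y i} with hK
  by_contra hc
  have hcK : c ∉ K := fun ⟨φ, h1, h2⟩ => hc ⟨φ, h1, h2⟩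
  have hconv : Convex ℝ K := by
    rintro y₁ ⟨φ₁, hφ₁, hy₁⟩ y₂ ⟨φ₂, hφ₂, hy₂⟩ t s ht hs hts
    haveI : IsFiniteMeasure φ₁ := isFiniteMeasure_of_le ψ hφ₁
    haveI : IsFiniteMeasure φ₂ := isFiniteMeasure_of_le ψ hφ₂
    refine ⟨ENNReal.ofReal t • φ₁ + ENNReal.ofReal s • φ₂, ?_, fun i => ?_⟩
    · refine Measure.le_iff'.2 fun A => ?_
      have : (ENNReal.ofReal t • φ₁ + ENNReal.ofReal s • φ₂) A =
          ENNReal.ofReal t * φ₁ A + ENNReal.ofReal s * φ₂ A := by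
        simp [Measure.add_apply, Measure.smul_apply, smul_eq_mul]
      rw [this]
      calc ENNReal.ofReal t * φ₁ A + ENNReal.ofReal s * φ₂ A ≤
          ENNReal.ofReal t * ψ A + ENNReal.ofReal s * ψ A := by
            exact add_le_add (mul_le_mul_of_nonneg_left (hφ₁ A) (by simp)) (mul_le_mul_of_nonneg_left (hφ₂ A) (by simp))
        _ = (ENNReal.ofReal t + ENNReal.ofReal s) * ψ A := by ring
        _ = ψ A := by
            rw [← ENNReal.ofReal_add ht hs, hts, ENNReal.ofReal_one, one_mul]
    · have i1 : Integrable (H i) ((ENNReal.ofReal t • φ₁)) := by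
        haveI : IsFiniteMeasure (ENNReal.ofReal t • φ₁ : Measure X) := by
          refine ⟨?_⟩
          rw [Measure.smul_apply, smul_eq_mul]
          exact ENNReal.mul_lt_top ENNReal.ofReal_lt_top (measure_lt_top φ₁ univ)
        exact integrable_of_bdd (hm i) (hb i)
      have i2 : Integrable (H i) ((ENNReal.ofReal s • φ₂)) := by
        haveI : IsFiniteMeasure (ENNReal.ofReal s • φ₂ : Measure X) := by
          refine ⟨?_⟩
          rw [Measure.smul_apply, smul_eq_mul]
          exact ENNReal.mul_lt_top ENNReal.ofReal_lt_top (measure_lt_top φ₂ univ)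
        exact integrable_of_bdd (hm i) (hb i)
      rw [integral_add_measure i1 i2, integral_smul_measure, integral_smul_measure,
        ENNReal.toReal_ofReal ht, ENNReal.toReal_ofReal hs, hy₁ i, hy₂ i]
      simp [smul_eq_mul]
  have hclosed : IsClosed K := by
    refine IsSeqClosed.isClosed ?_
    intro y ylim hyK hytend
    choose φs hφle hφeq using hyK
    set U := Ultrafilter.of (atTop : Filter ℕ) with hU
    refine ⟨limitMeasure U φs ψ hφle, limitMeasure_le _ _ _ _, fun i => ?_⟩
    have h1 : Tendsto (fun n => ∫ x, H i x ∂(φs n)) ↑U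
        (𝓝 (∫ x, H i x ∂(limitMeasure U φs ψ hφle))) :=
      limitMeasure_integral_tendsto U φs ψ hφle (hm i) (hb i)
    have h2 : Tendsto (fun n => ∫ x, H i x ∂(φs n)) ↑U (𝓝 (ylim i)) := by
      have h3 : Tendsto (fun n => y n i) atTop (𝓝 (ylim i)) := tendsto_pi_nhds.1 hytend i
      have h4 := h3.mono_left (Ultrafilter.of_le _)
      refine h4.congr fun n => (hφeq n i).symm
    exact tendsto_nhds_unique h1 h2
  obtain ⟨l, u, hlK, hlc⟩ := geometric_hahn_banach_closed_point hconv hclosed hcK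
  set a : Fin d → ℝ := fun i => l (fun j => if i = j then 1 else 0) with ha
  have hl_eq : ∀ y : Fin d → ℝ, l y = ∑ i, a i * y i := by
    intro y
    conv_lhs => rw [pi_eq_sum_univ y]
    rw [map_sum]
    exact Finset.sum_congr rfl fun i _ => by rw [l.map_smul, smul_eq_mul, mul_comm]
  set G : X → ℝ := fun x => ∑ i, a i * H i x with hG
  have hGm : Measurable G := Finset.measurable_sum _ fun i _ => (hm i).const_mul _
  have hGb : ∀ x, |G x| ≤ ∑ i : Fin d, |a i| * |C| := fun x => by
    refine (Finset.abs_sum_le_sum_abs _ _).trans ?_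
    refine Finset.sum_le_sum fun i _ => ?_
    rw [abs_mul]
    exact mul_le_mul_of_nonneg_left ((hb i x).trans (le_abs_self C)) (abs_nonneg _)
  set φm := ψ.restrict {x | 0 < G x} with hφm
  have hφm_le : φm ≤ ψ := Measure.restrict_le_self
  haveI : IsFiniteMeasure φm := isFiniteMeasure_of_le ψ hφm_le
  have hy : (fun i => ∫ x, H i x ∂φm) ∈ K := ⟨φm, hφm_le, fun i => rfl⟩
  have h1 := hlK _ hy
  rw [hl_eq] at h1
  have h2 : ∑ i, a i * ∫ x, H i x ∂φm = ∫ x, G x ∂φm := by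
    rw [hG, integral_finset_sum]
    · exact Finset.sum_congr rfl fun i _ => (MeasureTheory.integral_const_mul _ _).symm
    · exact fun i _ => (integrable_of_bdd (hm i) (hb i)).const_mul _
  have h3 : ∫ x, G x ∂φm = ∫ x, max (G x) 0 ∂ψ := integral_max_eq_restrict hGm hGb
  have h4 := hyp a
  have h5 := hl_eq c
  rw [hG] at h3
  linarith [h2.symm ▸ h1, h3, h4, hlc, h5]

section Flow

variable {J : Type*} [MeasurableSpace J]

lemma integral_fst_eq (φ : Measure (J × J)) [IsFiniteMeasure φ] {f : J → ℝ}
    (hf : Measurable f) : ∫ x, f x ∂(φ.fst) = ∫ p, f p.1 ∂φ :=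
  integral_map measurable_fst.aemeasurable hf.aestronglyMeasurable

lemma integral_snd_eq (φ : Measure (J × J)) [IsFiniteMeasure φ] {f : J → ℝ}
    (hf : Measurable f) : ∫ x, f x ∂(φ.snd) = ∫ p, f p.2 ∂φ :=
  integral_map measurable_snd.aemeasurable hf.aestronglyMeasurable

lemma forward_dir (v : J × J → ℝ) (hv_meas : Measurable v) (C : ℝ) (hv_bdd : ∀ p, |v p| ≤ C)
    (ψ : Measure (J × J)) [IsFiniteMeasure ψ]
    (σ τ : Measure J) [IsFiniteMeasure σ] [IsFiniteMeasure τ]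
    (φ : Measure (J × J)) [IsFiniteMeasure φ] (hmar : φ.fst + τ = φ.snd + σ)
    (hle : φ ≤ ψ) (hint : ∫ p, v p ∂φ = 1)
    (f : J → ℝ) (hf : Measurable f) (D : ℝ) (hfb : ∀ x, |f x| ≤ D) (b : ℝ) :
    (∫ x, f x ∂τ) - (∫ x, f x ∂σ) + b ≤ ∫ p, max (f p.2 - f p.1 + b * v p) 0 ∂ψ := by
  set g : J × J → ℝ := fun p => f p.2 - f p.1 + b * v p with hg
  have hgm : Measurable g := ((hf.comp measurable_snd).sub (hf.comp measurable_fst)).add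
    (hv_meas.const_mul b)
  have hgb : ∀ p, |g p| ≤ D + D + |b| * C := by
    intro p
    have h1 := hfb p.1; have h2 := hfb p.2; have h3 := hv_bdd p
    have : |b * v p| ≤ |b| * C := by
      rw [abs_mul]; exact mul_le_mul_of_nonneg_left h3 (abs_nonneg b)
    calc |g p| ≤ |f p.2 - f p.1| + |b * v p| := abs_add_le _ _
      _ ≤ (|f p.2| + |f p.1|) + |b| * C := add_le_add (abs_sub _ _) this
      _ ≤ D + D + |b| * C := by gcongr
  have hmaxb : ∀ p, |max (g p) 0| ≤ |D + D + |b| * C| := fun p => by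
    rw [abs_of_nonneg (le_max_right _ _)]
    exact max_le ((le_abs_self _).trans ((hgb p).trans (le_abs_self _)))
      (abs_nonneg _)
  have hmaxm : Measurable fun p => max (g p) 0 := hgm.max measurable_const
  have key1 : ∫ x, f x ∂(φ.fst) + ∫ x, f x ∂τ = ∫ x, f x ∂(φ.snd) + ∫ x, f x ∂σ := by
    have h := congrArg (fun μ => ∫ x, f x ∂μ) hmar
    simpa [integral_add_measure, integrable_of_bdd hf hfb] using h
  have key2 : ∫ p, g p ∂φ = ∫ x, f x ∂(φ.snd) - ∫ x, f x ∂(φ.fst) + b * ∫ p, v p ∂φ := by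
    rw [hg, integral_snd_eq φ hf, integral_fst_eq φ hf]
    have i1 : Integrable (fun p => f p.2) φ :=
      integrable_of_bdd (hf.comp measurable_snd) (fun p : J × J => hfb p.2)
    have i2 : Integrable (fun p => f p.1) φ :=
      integrable_of_bdd (hf.comp measurable_fst) (fun p : J × J => hfb p.1)
    have i3 : Integrable (fun p => b * v p) φ :=
      (integrable_of_bdd hv_meas hv_bdd).const_mul b
    have i12 : Integrable (fun p : J × J => f p.2 - f p.1) φ := i1.sub i2
    rw [integral_add i12 i3, integral_sub i1 i2, MeasureTheory.integral_const_mul]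
  have step1 : (∫ x, f x ∂τ) - (∫ x, f x ∂σ) + b = ∫ p, g p ∂φ := by
    rw [key2, hint]; linarith
  rw [step1]
  calc ∫ p, g p ∂φ ≤ ∫ p, max (g p) 0 ∂φ := by
        refine integral_mono (integrable_of_bdd hgm hgb) (integrable_of_bdd hmaxm hmaxb) ?_
        exact fun p => le_max_left _ _
    _ ≤ ∫ p, max (g p) 0 ∂ψ := by
        refine integral_mono_measure hle (ae_of_all _ fun p => le_max_right _ _) ?_
        exact integrable_of_bdd hmaxm hmaxb

end Flow

section Scale

variable {J : Type*} [MeasurableSpace J]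

lemma hyp_scale (v : J × J → ℝ)
    (ψ : Measure (J × J)) [IsFiniteMeasure ψ]
    (σ τ : Measure J) [IsFiniteMeasure σ] [IsFiniteMeasure τ]
    (hyp : ∀ f : J → ℝ, Measurable f → (∃ C, ∀ x, |f x| ≤ C) →
        ∀ b : ℝ, b ∈ ({-1, 0, 1} : Set ℝ) →
          (∫ x, f x ∂τ) - (∫ x, f x ∂σ) + b ≤ ∫ p, max (f p.2 - f p.1 + b * v p) 0 ∂ψ)
    (f : J → ℝ) (hf : Measurable f) (hfb : ∃ C, ∀ x, |f x| ≤ C) (b : ℝ) :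
    (∫ x, f x ∂τ) - (∫ x, f x ∂σ) + b ≤ ∫ p, max (f p.2 - f p.1 + b * v p) 0 ∂ψ := by
  rcases eq_or_ne b 0 with hb | hb
  · exact hb ▸ hyp f hf hfb 0 (by simp)
  set r : ℝ := |b| with hr
  have hr0 : 0 < r := abs_pos.2 hb
  set s : ℝ := b / r with hs
  have hmem : s ∈ ({-1, 0, 1} : Set ℝ) := by
    rcases lt_or_gt_of_ne hb with h | h
    · have : s = -1 := by rw [hs, hr, abs_of_neg h]; field_simp
      simp [this]
    · have : s = 1 := by rw [hs, hr, abs_of_pos h]; field_simp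
      simp [this]
  have hbs : b = r * s := by rw [hs]; field_simp
  obtain ⟨C, hC⟩ := hfb
  have hf'b : ∀ x, |r⁻¹ * f x| ≤ |r⁻¹| * C := fun x => by
    rw [abs_mul]
    exact mul_le_mul_of_nonneg_left (hC x) (abs_nonneg _)
  have key := hyp (fun x => r⁻¹ * f x) (hf.const_mul _) ⟨|r⁻¹| * C, hf'b⟩ s hmem
  rw [MeasureTheory.integral_const_mul, MeasureTheory.integral_const_mul] at key
  have key2 := mul_le_mul_of_nonneg_left key hr0.le
  have hrhs : r * ∫ p, max (r⁻¹ * f p.2 - r⁻¹ * f p.1 + s * v p) 0 ∂ψ =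
      ∫ p, max (f p.2 - f p.1 + b * v p) 0 ∂ψ := by
    rw [← MeasureTheory.integral_const_mul]
    refine integral_congr_ae (Eventually.of_forall fun p => ?_)
    show r * max (r⁻¹ * f p.2 - r⁻¹ * f p.1 + s * v p) 0 = max (f p.2 - f p.1 + b * v p) 0
    rw [mul_max_of_nonneg _ _ hr0.le, mul_zero]
    congr 1
    rw [hbs]
    field_simp
  have hlhs : r * (r⁻¹ * ∫ x, f x ∂τ - r⁻¹ * ∫ x, f x ∂σ + s) =
      (∫ x, f x ∂τ) - (∫ x, f x ∂σ) + b := by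
    rw [hbs]; field_simp
  rw [hrhs, hlhs] at key2
  exact key2

end Scale

section Reverse

variable {J : Type*} [MeasurableSpace J] [StandardBorelSpace J]

lemma indicator_abs_le (A : Set J) (x : J) : |A.indicator (1 : J → ℝ) x| ≤ 1 := by
  by_cases hx : x ∈ A <;> simp [indicator_of_mem, indicator_of_notMem, hx]

lemma reverse_dir (v : J × J → ℝ) (hv_meas : Measurable v) (C : ℝ) (hv_bdd : ∀ p, |v p| ≤ C)
    (ψ : Measure (J × J)) [IsFiniteMeasure ψ]
    (σ τ : Measure J) [IsFiniteMeasure σ] [IsFiniteMeasure τ]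
    (hστ : σ univ = τ univ)
    (hyp : ∀ f : J → ℝ, Measurable f → (∃ D, ∀ x, |f x| ≤ D) → ∀ b : ℝ,
          (∫ x, f x ∂τ) - (∫ x, f x ∂σ) + b ≤ ∫ p, max (f p.2 - f p.1 + b * v p) 0 ∂ψ) :
    ∃ φ : Measure (J × J), IsFiniteMeasure φ ∧ φ.fst + τ = φ.snd + σ ∧ φ ≤ ψ ∧
      (∫ p, v p ∂φ) = 1 := by
  classical
  -- countable generating family
  obtain ⟨e, he⟩ : ∃ e : ℕ → Set J, MeasurableSpace.countableGeneratingSet J = range e := by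
    exact Set.Countable.exists_eq_range
      (MeasurableSpace.countable_countableGeneratingSet (α := J))
      ⟨∅, MeasurableSpace.empty_mem_countableGeneratingSet⟩
  have he_meas : ∀ i, MeasurableSet (e i) := by
    intro i
    have hmem : e i ∈ MeasurableSpace.countableGeneratingSet J := by
      rw [he]; exact mem_range_self i
    rw [← MeasurableSpace.generateFrom_countableGeneratingSet (α := J)]
    exact MeasurableSpace.measurableSet_generateFrom hmem
  obtain ⟨F, hF⟩ := exists_surjective_nat (Finset ℕ)
  set A : ℕ → Set J := fun n => ⋂ i ∈ F n, e i with hA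
  have hAmeas : ∀ n, MeasurableSet (A n) := fun n =>
    MeasurableSet.biInter (Finset.countable_toSet _) fun i _ => he_meas i
  -- π-system
  have hpi : IsPiSystem (range A) := by
    rintro _ ⟨m, rfl⟩ _ ⟨k, rfl⟩ _
    obtain ⟨n, hn⟩ := hF (F m ∪ F k)
    refine ⟨n, ?_⟩
    rw [hA]
    simp only
    rw [hn]
    ext x
    simp only [mem_iInter, Finset.mem_union, mem_inter_iff]
    constructor
    · intro h; exact ⟨fun i hi => h i (Or.inl hi), fun i hi => h i (Or.inr hi)⟩
    · rintro ⟨h1, h2⟩ i (hi | hi); exacts [h1 i hi, h2 i hi]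
  have hgen : (inferInstance : MeasurableSpace J) = MeasurableSpace.generateFrom (range A) := by
    refine le_antisymm ?_ ?_
    · conv_lhs => rw [← MeasurableSpace.generateFrom_countableGeneratingSet (α := J)]
      refine MeasurableSpace.generateFrom_le fun t ht => ?_
      rw [he] at ht
      obtain ⟨i, rfl⟩ := ht
      obtain ⟨n, hn⟩ := hF {i}
      have : e i = A n := by rw [hA]; simp only; rw [hn]; simp
      rw [this]
      exact MeasurableSpace.measurableSet_generateFrom (mem_range_self n)
    · exact MeasurableSpace.generateFrom_le (by rintro _ ⟨n, rfl⟩; exact hAmeas n)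
  -- finite-dimensional solutions
  have hex : ∀ n : ℕ, ∃ φ : Measure (J × J), φ ≤ ψ ∧ (∫ p, v p ∂φ) = 1 ∧
      ∀ k < n, ∫ p, ((A k).indicator 1 p.2 - (A k).indicator 1 p.1) ∂φ =
        (τ (A k)).toReal - (σ (A k)).toReal := by
    intro n
    set H : Fin (n + 1) → (J × J) → ℝ := Fin.snoc
      (fun i : Fin n => fun p => (A i).indicator 1 p.2 - (A i).indicator 1 p.1) v with hH
    set c : Fin (n + 1) → ℝ := Fin.snoc
      (fun i : Fin n => (τ (A i)).toReal - (σ (A i)).toReal) 1 with hc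
    have hHm : ∀ i, Measurable (H i) := by
      refine Fin.lastCases ?_ ?_
      · rw [hH]; simp only [Fin.snoc_last]; exact hv_meas
      · intro i
        rw [hH]; simp only [Fin.snoc_castSucc]
        exact ((measurable_const.indicator (hAmeas i)).comp measurable_snd).sub
          ((measurable_const.indicator (hAmeas i)).comp measurable_fst)
    have hHb : ∀ i p, |H i p| ≤ |C| + 2 := by
      refine Fin.lastCases ?_ ?_
      · rw [hH]; simp only [Fin.snoc_last]
        intro p
        have := hv_bdd p
        have h2 := le_abs_self C
        linarith
      · intro i p
        rw [hH]; simp only [Fin.snoc_castSucc]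
        have h1 := indicator_abs_le (A i) p.2
        have h2 := indicator_abs_le (A i) p.1
        have h3 : |(A (i:ℕ)).indicator (1 : J → ℝ) p.2 - (A (i:ℕ)).indicator (1 : J → ℝ) p.1| ≤
            |(A (i:ℕ)).indicator (1 : J → ℝ) p.2| + |(A (i:ℕ)).indicator (1 : J → ℝ) p.1| :=
          abs_sub _ _
        have h4 : (0:ℝ) ≤ |C| := abs_nonneg C
        linarith
    have hhyp : ∀ a : Fin (n + 1) → ℝ,
        ∑ i, a i * c i ≤ ∫ p, max (∑ i, a i * H i p) 0 ∂ψ := by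
      intro a
      set f : J → ℝ := fun x => ∑ i : Fin n, a i.castSucc * (A i).indicator 1 x with hf
      set b : ℝ := a (Fin.last n) with hb
      have hfm : Measurable f :=
        Finset.measurable_sum _ fun i _ => (measurable_const.indicator (hAmeas i)).const_mul _
      have hfb : ∀ x, |f x| ≤ ∑ i : Fin n, |a i.castSucc| := by
        intro x
        refine (Finset.abs_sum_le_sum_abs _ _).trans (Finset.sum_le_sum fun i _ => ?_)
        rw [abs_mul]
        calc |a i.castSucc| * |(A i).indicator 1 x| ≤ |a i.castSucc| * 1 :=
              mul_le_mul_of_nonneg_left (indicator_abs_le _ _) (abs_nonneg _)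
          _ = |a i.castSucc| := mul_one _
      have hint : ∀ (ν : Measure J) [IsFiniteMeasure ν],
          ∫ x, f x ∂ν = ∑ i : Fin n, a i.castSucc * (ν (A i)).toReal := by
        intro ν _
        rw [hf, integral_finset_sum]
        · refine Finset.sum_congr rfl fun i _ => ?_
          rw [MeasureTheory.integral_const_mul, integral_indicator_one (hAmeas i)]
          rfl
        · exact fun i _ =>
            ((integrable_const _).indicator (hAmeas i)).const_mul _
      have hsum_eq : ∀ p : J × J, ∑ i, a i * H i p = f p.2 - f p.1 + b * v p := by
        intro p
        rw [Fin.sum_univ_castSucc]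
        rw [hH, hf, hb]
        simp only [Fin.snoc_castSucc, Fin.snoc_last]
        rw [← Finset.sum_sub_distrib]
        congr 1
        exact Finset.sum_congr rfl fun i _ => by ring
      have hlhs : ∑ i, a i * c i =
          (∫ x, f x ∂τ) - (∫ x, f x ∂σ) + b := by
        rw [Fin.sum_univ_castSucc, hc]
        simp only [Fin.snoc_castSucc, Fin.snoc_last]
        rw [hint τ, hint σ, ← Finset.sum_sub_distrib, mul_one]
        congr 1
        exact Finset.sum_congr rfl fun i _ => by ring
      have key := hyp f hfm ⟨∑ i : Fin n, |a i.castSucc|, hfb⟩ b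
      rw [hlhs]
      refine key.trans (le_of_eq ?_)
      exact integral_congr_ae (Eventually.of_forall fun p => by
        show max (f p.2 - f p.1 + b * v p) 0 = max (∑ i, a i * H i p) 0
        rw [hsum_eq p])
    obtain ⟨φ, hφle, hφeq⟩ := exists_measure_of_constraints H (|C| + 2) hHm hHb _ hhyp
    refine ⟨φ, hφle, ?_, ?_⟩
    · have := hφeq (Fin.last n)
      rw [hH, hc] at this
      simpa [Fin.snoc_last] using this
    · intro k hk
      have := hφeq (Fin.castSucc ⟨k, hk⟩)
      rw [hH, hc, Fin.snoc_castSucc, Fin.snoc_castSucc] at this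
      exact this
  choose φseq hφle hφv hφA using hex
  set U : Ultrafilter ℕ := Ultrafilter.of atTop with hU
  set μ : Measure (J × J) := limitMeasure U φseq ψ hφle with hμ
  have hμle : μ ≤ ψ := limitMeasure_le U φseq ψ hφle
  haveI hμfin : IsFiniteMeasure μ := isFiniteMeasure_of_le ψ hμle
  have hUle : (↑U : Filter ℕ) ≤ atTop := Ultrafilter.of_le _
  -- cost constraint
  have hμv : ∫ p, v p ∂μ = 1 := by
    have h1 : Tendsto (fun n => ∫ p, v p ∂(φseq n)) ↑U (𝓝 (∫ p, v p ∂μ)) :=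
      limitMeasure_integral_tendsto U φseq ψ hφle hv_meas hv_bdd
    have h2 : Tendsto (fun n => ∫ p, v p ∂(φseq n)) ↑U (𝓝 1) := by
      refine Tendsto.congr (fun n => (hφv n).symm) tendsto_const_nhds
    exact tendsto_nhds_unique h1 h2
  -- marginal constraints
  have hμA : ∀ k, ∫ p, ((A k).indicator 1 p.2 - (A k).indicator 1 p.1) ∂μ =
      (τ (A k)).toReal - (σ (A k)).toReal := by
    intro k
    set g : (J × J) → ℝ := fun p => (A k).indicator 1 p.2 - (A k).indicator 1 p.1 with hg
    have hgm : Measurable g :=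
      ((measurable_const.indicator (hAmeas k)).comp measurable_snd).sub
        ((measurable_const.indicator (hAmeas k)).comp measurable_fst)
    have hgb : ∀ p, |g p| ≤ 2 := by
      intro p
      have h1 := indicator_abs_le (A k) p.2
      have h2 := indicator_abs_le (A k) p.1
      have h3 : |(A k).indicator (1 : J → ℝ) p.2 - (A k).indicator (1 : J → ℝ) p.1| ≤
          |(A k).indicator (1 : J → ℝ) p.2| + |(A k).indicator (1 : J → ℝ) p.1| := abs_sub _ _
      rw [hg]; dsimp only; linarith
    have h1 : Tendsto (fun n => ∫ p, g p ∂(φseq n)) ↑U (𝓝 (∫ p, g p ∂μ)) :=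
      limitMeasure_integral_tendsto U φseq ψ hφle hgm hgb
    have hev : ∀ᶠ n in ↑U, ∫ p, g p ∂(φseq n) = (τ (A k)).toReal - (σ (A k)).toReal := by
      refine Eventually.filter_mono hUle ?_
      exact eventually_atTop.2 ⟨k + 1, fun n hn => hφA n k (by omega)⟩
    have h2 : Tendsto (fun n => ∫ p, g p ∂(φseq n)) ↑U
        (𝓝 ((τ (A k)).toReal - (σ (A k)).toReal)) :=
      Tendsto.congr' (EventuallyEq.symm hev) tendsto_const_nhds
    exact tendsto_nhds_unique h1 h2
  -- marginal equality
  have hmar : μ.fst + τ = μ.snd + σ := by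
    refine ext_of_generate_finite (range A) hgen hpi ?_ ?_
    · rintro _ ⟨k, rfl⟩
      have hind : Measurable ((A k).indicator (1 : J → ℝ)) :=
        measurable_const.indicator (hAmeas k)
      have i1 : Integrable (fun p : J × J => (A k).indicator 1 p.2) μ :=
        integrable_of_bdd (hind.comp measurable_snd) (fun p : J × J => indicator_abs_le _ _)
      have i2 : Integrable (fun p : J × J => (A k).indicator 1 p.1) μ :=
        integrable_of_bdd (hind.comp measurable_fst) (fun p : J × J => indicator_abs_le _ _)
      have key : (μ.snd (A k)).toReal - (μ.fst (A k)).toReal =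
          (τ (A k)).toReal - (σ (A k)).toReal := by
        have h := hμA k
        have h2 : ∫ p, ((A k).indicator 1 p.2 - (A k).indicator 1 p.1) ∂μ =
            (μ.snd (A k)).toReal - (μ.fst (A k)).toReal := by
          rw [integral_sub i1 i2, ← integral_snd_eq μ hind, ← integral_fst_eq μ hind,
            integral_indicator_one (hAmeas k), integral_indicator_one (hAmeas k)]
          rfl
        rw [h2] at h
        exact h
      have hfin : ∀ (m : ℝ≥0∞), m = μ.fst (A k) ∨ m = μ.snd (A k) ∨ m = τ (A k) ∨
          m = σ (A k) → m ≠ ⊤ := by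
        rintro m (rfl | rfl | rfl | rfl)
        exacts [measure_ne_top _ _, measure_ne_top _ _, measure_ne_top _ _, measure_ne_top _ _]
      rw [Measure.add_apply, Measure.add_apply]
      rw [← ENNReal.toReal_eq_toReal_iff' (by
          exact ENNReal.add_ne_top.2 ⟨measure_ne_top _ _, measure_ne_top _ _⟩)
        (by exact ENNReal.add_ne_top.2 ⟨measure_ne_top _ _, measure_ne_top _ _⟩),
        ENNReal.toReal_add (measure_ne_top _ _) (measure_ne_top _ _),
        ENNReal.toReal_add (measure_ne_top _ _) (measure_ne_top _ _)]
      linarith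
    · rw [Measure.add_apply, Measure.add_apply, Measure.fst_univ, Measure.snd_univ, hστ]
  exact ⟨μ, hμfin, hmar, hμle, hμv⟩

end Reverse

end MinFlowAux

open MeasureTheory Set

/-- **Min-cost flow theorem for measures.** Given a bounded nonnegative measurable cost `v`,
a finite capacity measure `ψ` on `J × J`, and finite nonnegative measures `σ, τ` on `J` with
`σ(J) = τ(J)`, there is a feasible `σ`-`τ` flow `φ` with `∫ v dφ = 1` iff
`∫ (f(y) - f(x) + b·v(x,y))₊ dψ ≥ ∫ f dτ - ∫ f dσ + b` for every bounded measurable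
`f : J → ℝ` and every `b ∈ {-1, 0, 1}`. -/
theorem stmt_7 {J : Type*} [MeasurableSpace J] [StandardBorelSpace J]
    (v : J × J → ℝ) (hv_meas : Measurable v) (hv_bdd : ∃ C, ∀ p, |v p| ≤ C)
    (hv_nonneg : ∀ p, 0 ≤ v p)
    (ψ : Measure (J × J)) [IsFiniteMeasure ψ]
    (σ τ : Measure J) [IsFiniteMeasure σ] [IsFiniteMeasure τ]
    (hστ : σ univ = τ univ) :
    (∃ φ : Measure (J × J), IsFiniteMeasure φ ∧ φ.fst + τ = φ.snd + σ ∧ φ ≤ ψ ∧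
        (∫ p, v p ∂φ) = 1) ↔
      (∀ f : J → ℝ, Measurable f → (∃ C, ∀ x, |f x| ≤ C) →
        ∀ b : ℝ, b ∈ ({-1, 0, 1} : Set ℝ) →
          (∫ x, f x ∂τ) - (∫ x, f x ∂σ) + b ≤
            ∫ p, max (f p.2 - f p.1 + b * v p) 0 ∂ψ) := by
  constructor
  · rintro ⟨φ, hfin, hmar, hle, hint⟩ f hf hfbdd b _
    obtain ⟨C, hC⟩ := hv_bdd
    obtain ⟨D, hD⟩ := hfbdd
    haveI := hfin
    exact forward_dir v hv_meas C hC ψ σ τ φ hmar hle hint f hf D hD b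
  · intro hyp
    obtain ⟨C, hC⟩ := hv_bdd
    exact reverse_dir v hv_meas C hC ψ σ τ hστ
      (fun f hf hfb b => hyp_scale v ψ σ τ hyp f hf hfb b)
end

section
/- Let (J, 𝒜) be a standard Borel space, let η be a Borel probability measure on J × J whose two marginals both equal π (so (𝒜, η) is a Markov space with stationary distribution π), and assume the Markov space is indecomposable: η(A × Aᶜ) > 0 for every Borel set A ⊆ J with 0 < π(A) < 1. Let P be a Markov transition kernel for η, i.e. a Markov kernel x ↦ P_x from J to J such that η(A × B) = ∫_A P_x(B) dπ(x) for all Borel A, B ⊆ J. Then for every Borel set S ⊆ J with π(S) > 0 and for π-almost every x ∈ J, the Markov chain (w⁰, w¹, w², …) with transition kernel P started at w⁰ = x almost surely visits S, i.e. with probability 1 there exists n ≥ 0 with wⁿ ∈ S. -/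
open MeasureTheory Set
open scoped ENNReal

/-- `avoidProb P S n x` is the probability that the Markov chain with transition kernel `P`
started at `x` avoids the set `S` during its first `n` steps (including time `0`). -/
noncomputable def avoidProb {J : Type*} [MeasurableSpace J]
    (P : ProbabilityTheory.Kernel J J) (S : Set J) : ℕ → J → ℝ≥0∞
  | 0 => Sᶜ.indicator fun _ => 1
  | n + 1 => Sᶜ.indicator fun x => ∫⁻ y, avoidProb P S n y ∂(P x)

/-- **Almost sure hitting of positive-measure sets.** Let `η` be an indecomposable Markov space
on a standard Borel space `J` with stationary distribution `π`, and let `P` be a Markov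
transition kernel for `η`. Then for every Borel set `S` with `π(S) > 0` and `π`-almost every
starting point `x`, the Markov chain started at `x` almost surely visits `S`; equivalently,
the probability of avoiding `S` for `n` steps tends to `0`. -/
theorem stmt_12 {J : Type*} [MeasurableSpace J] [StandardBorelSpace J]
    (η : Measure (J × J)) [IsProbabilityMeasure η] (π : Measure J)
    (hfst : η.fst = π) (hsnd : η.snd = π)
    (hindec : ∀ A : Set J, MeasurableSet A → 0 < π A → π A < 1 → 0 < η (A ×ˢ Aᶜ))
    (P : ProbabilityTheory.Kernel J J) [ProbabilityTheory.IsMarkovKernel P]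
    (hP : ∀ A B : Set J, MeasurableSet A → MeasurableSet B →
      η (A ×ˢ B) = ∫⁻ x in A, P x B ∂π)
    (S : Set J) (hS : MeasurableSet S) (hSpos : 0 < π S) :
    ∀ᵐ x ∂π, Filter.Tendsto (fun n => avoidProb P S n x) Filter.atTop (nhds 0) := by
  classical
  have hπ : IsProbabilityMeasure π := by rw [← hfst]; infer_instance
  set f : ℕ → J → ℝ≥0∞ := avoidProb P S with hf
  have hf0 : f 0 = Sᶜ.indicator fun _ => 1 := rfl
  have hfsucc : ∀ n, f (n + 1) = Sᶜ.indicator fun x => ∫⁻ y, f n y ∂(P x) := fun n => rfl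
  -- measurability
  have hmeas : ∀ n, Measurable (f n) := by
    intro n
    induction n with
    | zero => exact measurable_const.indicator hS.compl
    | succ n ih =>
      rw [hfsucc]
      exact (Measurable.lintegral_kernel (κ := P) ih).indicator hS.compl
  -- bounded by 1
  have hle1 : ∀ n x, f n x ≤ 1 := by
    intro n
    induction n with
    | zero =>
      intro x
      rw [hf0]
      exact Set.indicator_apply_le' (fun _ => le_rfl) (fun _ => zero_le)
    | succ n ih =>
      intro x
      rw [hfsucc]
      refine Set.indicator_apply_le' (fun _ => ?_) (fun _ => zero_le)
      calc ∫⁻ y, f n y ∂(P x) ≤ ∫⁻ _, 1 ∂(P x) := lintegral_mono ih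
        _ = 1 := by simp
  -- antitone
  have hstep : ∀ n x, f (n + 1) x ≤ f n x := by
    intro n
    induction n with
    | zero =>
      intro x
      rw [hfsucc, hf0]
      refine Set.indicator_le_indicator ?_
      calc ∫⁻ y, f 0 y ∂(P x) ≤ ∫⁻ _, 1 ∂(P x) := lintegral_mono (hle1 0)
        _ = 1 := by simp
    | succ n ih =>
      intro x
      rw [hfsucc, hfsucc]
      exact Set.indicator_le_indicator (lintegral_mono ih)
  have hanti : ∀ x, Antitone fun n => f n x := fun x =>
    antitone_nat_of_succ_le fun n => hstep n x
  have hantiF : Antitone f := antitone_nat_of_succ_le fun n x => hstep n x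
  -- the limit function
  set F : J → ℝ≥0∞ := fun x => ⨅ n, f n x with hFdef
  have hFmeas : Measurable F := Measurable.iInf hmeas
  have hFle1 : ∀ x, F x ≤ 1 := fun x => (iInf_le _ 0).trans (hle1 0 x)
  have hFS : ∀ x ∈ S, F x = 0 := by
    intro x hx
    refine le_antisymm ((iInf_le _ 0).trans ?_) (zero_le)
    rw [hf0, Set.indicator_of_notMem (by simpa using hx)]
  -- fixed point equation
  have hfix : ∀ x, F x = Sᶜ.indicator (fun x => ∫⁻ y, F y ∂(P x)) x := by
    intro x
    have hint : ∫⁻ y, F y ∂(P x) = ⨅ n, ∫⁻ y, f n y ∂(P x) := by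
      refine lintegral_iInf hmeas hantiF ?_
      refine ne_of_lt (lt_of_le_of_lt ?_ ENNReal.one_lt_top)
      calc ∫⁻ y, f 0 y ∂(P x) ≤ ∫⁻ _, 1 ∂(P x) := lintegral_mono (hle1 0)
        _ = 1 := by simp
    have hshift : F x = ⨅ n, f (n + 1) x := by
      refine le_antisymm (le_iInf fun n => iInf_le _ (n + 1)) (le_iInf fun n => ?_)
      exact (iInf_le (fun n => f (n + 1) x) n).trans (hstep n x)
    by_cases hx : x ∈ S
    · rw [hFS x hx, Set.indicator_of_notMem (by simpa using hx)]
    · have hx' : x ∈ Sᶜ := hx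
      rw [hshift, Set.indicator_of_mem hx', hint]
      exact iInf_congr fun n => by
        rw [hfsucc]; exact Set.indicator_of_mem hx' _
  -- F is subharmonic
  have hFle : ∀ x, F x ≤ ∫⁻ y, F y ∂(P x) := by
    intro x
    rw [hfix x]
    exact Set.indicator_apply_le' (fun _ => le_rfl) (fun _ => zero_le)
  -- stationarity: π.bind P = π
  have hbind : π.bind (fun x => P x) = π := by
    ext B hB
    rw [Measure.bind_apply hB P.measurable.aemeasurable]
    have h1 := hP Set.univ B MeasurableSet.univ hB
    rw [Measure.restrict_univ] at h1
    rw [← h1, Set.univ_prod, ← Measure.snd_apply hB, hsnd]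
  have hinv : ∀ g : J → ℝ≥0∞, Measurable g →
      ∫⁻ x, ∫⁻ y, g y ∂(P x) ∂π = ∫⁻ y, g y ∂π := by
    intro g hg
    conv_rhs => rw [← hbind]
    rw [Measure.lintegral_bind P.measurable.aemeasurable hg.aemeasurable]
  -- a general "harmonicity from subharmonicity" lemma
  have hharm : ∀ g : J → ℝ≥0∞, Measurable g → (∫⁻ x, g x ∂π ≠ ∞) →
      (∀ᵐ x ∂π, ∫⁻ y, g y ∂(P x) ≤ g x) →
      ∀ᵐ x ∂π, ∫⁻ y, g y ∂(P x) = g x := by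
    intro g hg hfin hle
    have hPg : Measurable fun x => ∫⁻ y, g y ∂(P x) :=
      Measurable.lintegral_kernel (κ := P) hg
    have hPgfin : ∫⁻ x, ∫⁻ y, g y ∂(P x) ∂π ≠ ∞ := by rw [hinv g hg]; exact hfin
    have h0 : ∫⁻ x, (g x - ∫⁻ y, g y ∂(P x)) ∂π = 0 := by
      rw [lintegral_sub hPg hPgfin hle, hinv g hg, tsub_self]
    have h1 := (lintegral_eq_zero_iff (hg.sub hPg)).mp h0
    filter_upwards [h1, hle] with x hx1 hx2
    exact le_antisymm hx2 (tsub_eq_zero_iff_le.mp hx1)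
  -- F is harmonic a.e.
  have hFint : ∫⁻ x, F x ∂π ≠ ∞ := by
    refine ne_of_lt (lt_of_le_of_lt ?_ ENNReal.one_lt_top)
    calc ∫⁻ x, F x ∂π ≤ ∫⁻ _, 1 ∂π := lintegral_mono hFle1
      _ = 1 := by simp
  have hPF : ∀ᵐ x ∂π, ∫⁻ y, F y ∂(P x) = F x := by
    have h0 : ∫⁻ x, (∫⁻ y, F y ∂(P x) - F x) ∂π = 0 := by
      rw [lintegral_sub hFmeas hFint (Filter.Eventually.of_forall hFle),
        hinv F hFmeas, tsub_self]
    have h1 := (lintegral_eq_zero_iff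
      ((Measurable.lintegral_kernel (κ := P) hFmeas).sub hFmeas)).mp h0
    filter_upwards [h1] with x hx
    exact le_antisymm (tsub_eq_zero_iff_le.mp hx) (hFle x)
  -- truncations are harmonic a.e.
  have hmin : ∀ c : ℝ≥0∞, c ≠ ∞ →
      ∀ᵐ x ∂π, ∫⁻ y, min (F y) c ∂(P x) = min (F x) c := by
    intro c hc
    set G : J → ℝ≥0∞ := fun x => min (F x) c with hGdef
    have hGmeas : Measurable G := hFmeas.min measurable_const
    have hGfin : ∫⁻ x, G x ∂π ≠ ∞ := by
      refine ne_of_lt (lt_of_le_of_lt ?_ hc.lt_top)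
      calc ∫⁻ x, G x ∂π ≤ ∫⁻ _, c ∂π := lintegral_mono fun x => min_le_right _ _
        _ = c := by simp
    have hsub : ∀ᵐ x ∂π, ∫⁻ y, G y ∂(P x) ≤ G x := by
      filter_upwards [hPF] with x hx
      refine le_min ?_ ?_
      · calc ∫⁻ y, G y ∂(P x) ≤ ∫⁻ y, F y ∂(P x) :=
            lintegral_mono fun y => min_le_left _ _
          _ = F x := hx
      · calc ∫⁻ y, G y ∂(P x) ≤ ∫⁻ _, c ∂(P x) :=
            lintegral_mono fun y => min_le_right _ _
          _ = c := by simp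
    exact hharm G hGmeas hGfin hsub
  -- almost surely, the chain does not decrease F
  have hsmall : ∀ᵐ x ∂π, P x {y | F y < F x} = 0 := by
    have hkey : ∀ᵐ x ∂π, ∀ q : ℚ,
        ∫⁻ y, min (F y) (Real.toNNReal q) ∂(P x) = min (F x) (Real.toNNReal q) :=
      ae_all_iff.mpr fun q => hmin _ ENNReal.coe_ne_top
    filter_upwards [hkey] with x hx
    have hsub : {y | F y < F x} ⊆
        ⋃ q : ℚ, {y | F y < (Real.toNNReal q : ℝ≥0∞) ∧ (Real.toNNReal q : ℝ≥0∞) < F x} := by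
      intro y hy
      obtain ⟨q, _, hq1, hq2⟩ := (ENNReal.lt_iff_exists_rat_btwn).mp hy
      exact Set.mem_iUnion.mpr ⟨q, hq1, hq2⟩
    refine measure_mono_null hsub (measure_iUnion_null fun q => ?_)
    set c : ℝ≥0∞ := (Real.toNNReal q : ℝ≥0∞) with hcdef
    by_cases hq : c < F x
    · -- from harmonicity of the truncation at level c: F ≥ c a.e. w.r.t. P x
      have h1 : ∫⁻ y, min (F y) c ∂(P x) = c := by
        rw [hx q, min_eq_right hq.le]
      have hminfin : ∫⁻ y, min (F y) c ∂(P x) ≠ ∞ := by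
        rw [h1]; exact ENNReal.coe_ne_top
      have h2 : ∫⁻ y, (c - min (F y) c) ∂(P x) = 0 := by
        rw [lintegral_sub (hFmeas.min measurable_const) hminfin
          (Filter.Eventually.of_forall fun y => min_le_right _ _), h1]
        simp
      have h3 := (lintegral_eq_zero_iff
        (measurable_const.sub (hFmeas.min measurable_const))).mp h2
      have h4 : ∀ᵐ y ∂(P x), ¬ (F y < c) := by
        filter_upwards [h3] with y hy
        intro hlt
        have : c ≤ min (F y) c := tsub_eq_zero_iff_le.mp hy
        exact absurd (this.trans (min_le_left _ _)) (not_le.mpr hlt)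
      have h5 : P x {y | F y < c} = 0 := by
        have := ae_iff.mp h4
        simpa using this
      exact measure_mono_null (fun y hy => hy.1) h5
    · have : {y | F y < c ∧ c < F x} = ∅ :=
        Set.eq_empty_iff_forall_notMem.mpr fun y hy => hq hy.2
      simp [this]
  -- η equals the composition-product of π and P
  have hηeq : η = π.compProd P := by
    refine MeasureTheory.ext_of_generate_finite _ generateFrom_prod.symm isPiSystem_prod
      ?_ ?_
    · rintro s ⟨A, hA, B, hB, rfl⟩
      rw [hP A B hA hB, Measure.compProd_apply_prod hA hB]
    · rw [Measure.compProd_apply_univ]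
      simp
  -- the set where F is positive
  set A : Set J := {x | 0 < F x} with hAdef
  have hAmeas : MeasurableSet A := measurableSet_lt measurable_const hFmeas
  have hASc : A ⊆ Sᶜ := fun x hx hxS => by
    simp only [hAdef, Set.mem_setOf_eq, hFS x hxS] at hx
    exact lt_irrefl 0 hx
  have hAlt1 : π A < 1 := by
    calc π A ≤ π Sᶜ := measure_mono hASc
      _ = 1 - π S := prob_compl_eq_one_sub hS
      _ < 1 := ENNReal.sub_lt_self ENNReal.one_ne_top one_ne_zero hSpos.ne'
  have hηA : η (A ×ˢ Aᶜ) = 0 := by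
    rw [hηeq, Measure.compProd_apply (hAmeas.prod hAmeas.compl)]
    rw [← lintegral_zero (μ := π)]
    refine lintegral_congr_ae ?_
    filter_upwards [hsmall] with x hx
    by_cases hxA : x ∈ A
    · have hpre : Prod.mk x ⁻¹' (A ×ˢ Aᶜ) = Aᶜ := by
        ext y; simp [hxA]
      rw [hpre]
      refine le_antisymm (le_trans (measure_mono ?_) hx.le) (zero_le)
      intro y hy
      have hy0 : F y = 0 := by
        by_contra h
        exact hy (pos_iff_ne_zero.mpr h)
      exact Set.mem_setOf_eq ▸ (hy0 ▸ hxA)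
    · have hpre : Prod.mk x ⁻¹' (A ×ˢ Aᶜ) = ∅ := by
        ext y; simp [hxA]
      rw [hpre]; simp
  have hA0 : π A = 0 := by
    by_contra h
    exact absurd hηA (ne_of_gt (hindec A hAmeas (pos_iff_ne_zero.mpr h) hAlt1))
  -- conclusion
  have hae : ∀ᵐ x ∂π, F x = 0 := by
    have := measure_eq_zero_iff_ae_notMem.mp hA0
    filter_upwards [this] with x hx
    exact le_antisymm (not_lt.mp hx) (zero_le)
  filter_upwards [hae] with x hx
  have := tendsto_atTop_iInf (hanti x)
  rwa [show (⨅ n, f n x) = 0 from hx] at this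
end

section
/- Let (J, 𝒜) be a standard Borel space, let ψ be a finite nonnegative Borel measure on J, and let μ₁, μ₂, … be finite signed Borel measures on J with total variation measures |μ_n| ≤ ψ (setwise). Then there is a strictly increasing sequence of indices n₁ < n₂ < ⋯ and a finite signed Borel measure μ with |μ| ≤ ψ such that μ_{n_i}(A) → μ(A) as i → ∞, for every Borel set A ⊆ J. -/
open MeasureTheory Set Filter Topology
open scoped ENNReal NNReal

section aux

/-- Weak Bolzano–Weierstrass in a separable real Hilbert space. -/
lemma weak_bw {H : Type*} [NormedAddCommGroup H] [InnerProductSpace ℝ H]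
    [CompleteSpace H] [TopologicalSpace.SeparableSpace H]
    (g : ℕ → H) (M : ℝ) (hM : ∀ n, ‖g n‖ ≤ M) :
    ∃ (φ : ℕ → ℕ) (g₀ : H), StrictMono φ ∧
      ∀ y : H, Tendsto (fun i => (inner ℝ (g (φ i)) y : ℝ)) atTop (𝓝 (inner ℝ g₀ y)) := by
  have hM0 : 0 ≤ M := le_trans (norm_nonneg _) (hM 0)
  have hne : Nonempty H := ⟨0⟩
  set u : ℕ → H := TopologicalSpace.denseSeq H with hu
  have hdense : DenseRange u := TopologicalSpace.denseRange_denseSeq H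
  set K : Set (ℕ → ℝ) := Set.univ.pi fun k => Icc (-(M * ‖u k‖)) (M * ‖u k‖) with hK
  have hKc : IsCompact K := isCompact_univ_pi fun k => isCompact_Icc
  have hmem : ∀ n, (fun k => (inner ℝ (g n) (u k) : ℝ)) ∈ K := by
    intro n
    rw [Set.mem_univ_pi]
    intro k
    have h1 : |(inner ℝ (g n) (u k) : ℝ)| ≤ ‖g n‖ * ‖u k‖ := abs_real_inner_le_norm _ _
    have h2 : ‖g n‖ * ‖u k‖ ≤ M * ‖u k‖ :=
      mul_le_mul_of_nonneg_right (hM n) (norm_nonneg _)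
    exact abs_le.mp (h1.trans h2)
  obtain ⟨L, -, φ, hφ, hconv⟩ := hKc.tendsto_subseq hmem
  have hk : ∀ k, Tendsto (fun i => (inner ℝ (g (φ i)) (u k) : ℝ)) atTop (𝓝 (L k)) :=
    fun k => tendsto_pi_nhds.mp hconv k
  have hcauchy : ∀ y : H, CauchySeq fun i => (inner ℝ (g (φ i)) y : ℝ) := by
    intro y
    rw [Metric.cauchySeq_iff]
    intro ε hε
    have hδ : 0 < ε / (4 * (M + 1)) := by positivity
    obtain ⟨k, hky⟩ := Metric.denseRange_iff.mp hdense y _ hδ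
    obtain ⟨N, hN⟩ := Metric.cauchySeq_iff.mp (hk k).cauchySeq (ε / 2) (by positivity)
    refine ⟨N, fun m hm n hn => ?_⟩
    have key : ∀ j, |(inner ℝ (g (φ j)) y : ℝ) - inner ℝ (g (φ j)) (u k)| ≤ ε / 4 := by
      intro j
      have he : (inner ℝ (g (φ j)) y : ℝ) - inner ℝ (g (φ j)) (u k) =
          inner ℝ (g (φ j)) (y - u k) := by rw [inner_sub_right]
      rw [he]
      have h1 : |(inner ℝ (g (φ j)) (y - u k) : ℝ)| ≤ ‖g (φ j)‖ * ‖y - u k‖ :=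
        abs_real_inner_le_norm _ _
      have h2 : ‖g (φ j)‖ * ‖y - u k‖ ≤ M * (ε / (4 * (M + 1))) := by
        apply mul_le_mul (hM _) _ (norm_nonneg _) hM0
        rw [← dist_eq_norm]; exact le_of_lt hky
      have h3 : M * (ε / (4 * (M + 1))) ≤ ε / 4 := by
        rw [mul_div_assoc', div_le_div_iff₀ (by positivity) (by norm_num : (0:ℝ) < 4)]
        nlinarith [mul_nonneg hM0 hε.le, hε.le]
      exact h1.trans (h2.trans h3)
    have hmn := hN m hm n hn
    rw [Real.dist_eq] at hmn ⊢
    have hdecomp : (inner ℝ (g (φ m)) y : ℝ) - inner ℝ (g (φ n)) y =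
        ((inner ℝ (g (φ m)) y : ℝ) - inner ℝ (g (φ m)) (u k))
        + ((inner ℝ (g (φ m)) (u k) : ℝ) - inner ℝ (g (φ n)) (u k))
        + ((inner ℝ (g (φ n)) (u k) : ℝ) - inner ℝ (g (φ n)) y) := by ring
    have key2 := key n
    rw [abs_sub_comm] at key2
    calc |(inner ℝ (g (φ m)) y : ℝ) - inner ℝ (g (φ n)) y|
        ≤ |((inner ℝ (g (φ m)) y : ℝ) - inner ℝ (g (φ m)) (u k))|
          + |((inner ℝ (g (φ m)) (u k) : ℝ) - inner ℝ (g (φ n)) (u k))|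
          + |((inner ℝ (g (φ n)) (u k) : ℝ) - inner ℝ (g (φ n)) y)| := by
            rw [hdecomp]; exact (abs_add_le _ _).trans (by gcongr; exact abs_add_le _ _)
      _ < ε := by
          have := key m
          linarith
  have hT : ∀ y : H, Tendsto (fun i => (inner ℝ (g (φ i)) y : ℝ)) atTop
      (𝓝 (limUnder atTop fun i => (inner ℝ (g (φ i)) y : ℝ))) :=
    fun y => (hcauchy y).tendsto_limUnder
  set T : H → ℝ := fun y => limUnder atTop fun i => (inner ℝ (g (φ i)) y : ℝ) with hTdef
  have hadd : ∀ y z, T (y + z) = T y + T z := by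
    intro y z
    have h12 : Tendsto (fun i => (inner ℝ (g (φ i)) (y + z) : ℝ)) atTop (𝓝 (T y + T z)) :=
      ((hT y).add (hT z)).congr fun i => (inner_add_right _ _ _).symm
    exact tendsto_nhds_unique (hT (y + z)) h12
  have hsmul : ∀ (c : ℝ) (y : H), T (c • y) = c * T y := by
    intro c y
    have h12 : Tendsto (fun i => (inner ℝ (g (φ i)) (c • y) : ℝ)) atTop (𝓝 (c * T y)) :=
      ((hT y).const_mul c).congr fun i => (inner_smul_right _ _ _).symm
    exact tendsto_nhds_unique (hT (c • y)) h12
  have hbound : ∀ y, |T y| ≤ M * ‖y‖ := by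
    intro y
    refine le_of_tendsto (hT y).abs (Eventually.of_forall fun i => ?_)
    exact (abs_real_inner_le_norm _ _).trans
      (mul_le_mul_of_nonneg_right (hM _) (norm_nonneg _))
  set Tl : H →ₗ[ℝ] ℝ :=
    { toFun := T
      map_add' := hadd
      map_smul' := hsmul } with hTl
  set Tc : H →L[ℝ] ℝ := LinearMap.mkContinuous Tl M (fun y => by
    rw [Real.norm_eq_abs]; exact hbound y) with hTc
  refine ⟨φ, (InnerProductSpace.toDual ℝ H).symm Tc, hφ, fun y => ?_⟩
  have hdual : (inner ℝ ((InnerProductSpace.toDual ℝ H).symm Tc) y : ℝ) = Tc y :=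
    InnerProductSpace.toDual_symm_apply
  rw [hdual]
  exact hT y

/-- `|s A| ≤` the total variation of `s` applied to `A`. -/
lemma abs_apply_le_tv {α : Type*} [MeasurableSpace α] (s : SignedMeasure α) {A : Set α}
    (hA : MeasurableSet A) : |s A| ≤ (s.totalVariation A).toReal := by
  have hs : s A = (s.toJordanDecomposition.posPart A).toReal
      - (s.toJordanDecomposition.negPart A).toReal := by
    conv_lhs => rw [← s.toSignedMeasure_toJordanDecomposition]
    exact Measure.toSignedMeasure_sub_apply hA
  rw [hs, SignedMeasure.totalVariation, Measure.add_apply,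
    ENNReal.toReal_add (measure_ne_top _ _) (measure_ne_top _ _)]
  refine (abs_sub _ _).trans ?_
  rw [abs_of_nonneg ENNReal.toReal_nonneg, abs_of_nonneg ENNReal.toReal_nonneg]

/-- If `|s A| ≤ ψ A` for all measurable `A`, then the total variation of `s` is `≤ ψ`. -/
lemma tv_le_of_abs_le {α : Type*} [MeasurableSpace α] (s : SignedMeasure α) (ψ : Measure α)
    [IsFiniteMeasure ψ] (hb : ∀ A, MeasurableSet A → |s A| ≤ (ψ A).toReal) :
    s.totalVariation ≤ ψ := by
  obtain ⟨i, hi₁, hi₂, hi₃, hP, hN⟩ := s.toJordanDecomposition_spec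
  rw [Measure.le_iff]
  intro A hA
  rw [SignedMeasure.totalVariation, Measure.add_apply, hP, hN,
    SignedMeasure.toMeasureOfZeroLE_apply _ hi₂ hi₁ hA,
    SignedMeasure.toMeasureOfLEZero_apply _ hi₃ hi₁.compl hA]
  have h1 : s (i ∩ A) ≤ (ψ (i ∩ A)).toReal :=
    le_trans (le_abs_self _) (hb _ (hi₁.inter hA))
  have h2 : -s (iᶜ ∩ A) ≤ (ψ (iᶜ ∩ A)).toReal :=
    le_trans (neg_le_abs _) (hb _ (hi₁.compl.inter hA))
  have key : ∀ (x : NNReal) (B : Set α), (x : ℝ) ≤ (ψ B).toReal → (x : ℝ≥0∞) ≤ ψ B := by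
    intro x B hx
    rw [ENNReal.coe_nnreal_eq, ← ENNReal.ofReal_toReal (measure_ne_top ψ B)]
    exact ENNReal.ofReal_le_ofReal hx
  refine le_trans (add_le_add (key _ (i ∩ A) h1) (key _ (iᶜ ∩ A) h2)) (le_of_eq ?_)
  rw [Set.inter_comm i A, Set.inter_comm iᶜ A, ← Set.diff_eq]
  exact measure_inter_add_diff A hi₁

end aux

/-- **Compactness of dominated signed measures.** Let `ψ` be a finite nonnegative Borel measure
on a standard Borel space `J` and let `μ₁, μ₂, …` be finite signed Borel measures with total
variation measures `|μ_n| ≤ ψ`. Then there is a subsequence `n₁ < n₂ < ⋯` and a finite signed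
measure `μ` with `|μ| ≤ ψ` such that `μ_{n_i}(A) → μ(A)` for every Borel set `A`. -/
theorem stmt_14 {J : Type*} [MeasurableSpace J] [StandardBorelSpace J]
    (ψ : Measure J) [IsFiniteMeasure ψ]
    (μ : ℕ → SignedMeasure J) (h : ∀ n, (μ n).totalVariation ≤ ψ) :
    ∃ (φ : ℕ → ℕ) (ν : SignedMeasure J), StrictMono φ ∧ ν.totalVariation ≤ ψ ∧
      ∀ A : Set J, MeasurableSet A →
        Filter.Tendsto (fun i => μ (φ i) A) Filter.atTop (nhds (ν A)) := by
  haveI : Fact ((1:ℝ≥0∞) ≤ 2) := fact_one_le_two_ennreal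
  haveI : Fact ((2:ℝ≥0∞) ≠ ∞) := ⟨by norm_num⟩
  -- absolute continuity and densities
  have hac : ∀ n, μ n ≪ᵥ ψ.toENNRealVectorMeasure := by
    intro n
    refine VectorMeasure.AbsolutelyContinuous.mk fun S hS hS0 => ?_
    rw [Measure.toENNRealVectorMeasure_apply_measurable hS] at hS0
    refine SignedMeasure.null_of_totalVariation_zero _ (le_antisymm ?_ zero_le)
    calc (μ n).totalVariation S ≤ ψ S := Measure.le_iff'.mp (h n) S
      _ = 0 := hS0
  have hfi : ∀ n, Integrable ((μ n).rnDeriv ψ) ψ :=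
    fun n => SignedMeasure.integrable_rnDeriv _ _
  have happ : ∀ n A, MeasurableSet A → μ n A = ∫ x in A, (μ n).rnDeriv ψ x ∂ψ := by
    intro n A hA
    conv_lhs => rw [← (SignedMeasure.absolutelyContinuous_iff_withDensityᵥ_rnDeriv_eq
      (μ n) ψ).mp (hac n)]
    rw [withDensityᵥ_apply (hfi n) hA]
  have habs : ∀ (s : SignedMeasure J), s.totalVariation ≤ ψ →
      ∀ A, MeasurableSet A → |s A| ≤ (ψ A).toReal := by
    intro s hs A hA
    exact (abs_apply_le_tv s hA).trans
      (ENNReal.toReal_mono (measure_ne_top _ _) (Measure.le_iff'.mp hs A))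
  -- the densities are bounded by 1 a.e.
  have hbd : ∀ n, ∀ᵐ x ∂ψ, |(μ n).rnDeriv ψ x| ≤ 1 := by
    intro n
    have h1 : 0 ≤ᵐ[ψ] fun x => 1 - (μ n).rnDeriv ψ x := by
      refine ae_nonneg_of_forall_setIntegral_nonneg ((integrable_const 1).sub (hfi n)) ?_
      intro A hA _
      rw [integral_sub ((integrable_const 1).integrableOn) ((hfi n).integrableOn),
        setIntegral_const, smul_eq_mul, mul_one, ← happ n A hA, sub_nonneg]
      exact (le_abs_self _).trans (habs (μ n) (h n) A hA)
    have h2 : 0 ≤ᵐ[ψ] fun x => 1 + (μ n).rnDeriv ψ x := by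
      refine ae_nonneg_of_forall_setIntegral_nonneg ((integrable_const 1).add (hfi n)) ?_
      intro A hA _
      rw [integral_add ((integrable_const 1).integrableOn) ((hfi n).integrableOn),
        setIntegral_const, smul_eq_mul, mul_one, ← happ n A hA, ← sub_neg_eq_add, sub_nonneg]
      exact (neg_le_abs _).trans (habs (μ n) (h n) A hA)
    filter_upwards [h1, h2] with x hx1 hx2
    simp only [Pi.zero_apply] at hx1 hx2
    rw [abs_le]
    constructor <;> linarith
  have hm : ∀ n, MemLp ((μ n).rnDeriv ψ) 2 ψ := fun n =>
    MemLp.of_bound (SignedMeasure.measurable_rnDeriv _ _).aestronglyMeasurable 1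
      ((hbd n).mono fun x hx => by simpa [Real.norm_eq_abs] using hx)
  set g : ℕ → Lp ℝ 2 ψ := fun n => (hm n).toLp _ with hg
  have hMg : ∀ n, ‖g n‖ ≤ (measureUnivNNReal ψ : ℝ) ^ (2:ℝ≥0∞).toReal⁻¹ * 1 := by
    intro n
    refine Lp.norm_le_of_ae_bound zero_le_one ?_
    filter_upwards [(hm n).coeFn_toLp, hbd n] with x hx h1
    rw [hx]
    simpa [Real.norm_eq_abs] using h1
  -- weak limit
  obtain ⟨φ, g₀, hφ, hweak⟩ := weak_bw g _ hMg
  have hg₀i : Integrable (⇑g₀) ψ := (Lp.memLp g₀).integrable (by norm_num)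
  have hconv : ∀ A : Set J, MeasurableSet A →
      Tendsto (fun i => μ (φ i) A) atTop (𝓝 (ψ.withDensityᵥ (⇑g₀) A)) := by
    intro A hA
    have hψA : ψ A ≠ ∞ := measure_ne_top ψ A
    set χ : Lp ℝ 2 ψ := indicatorConstLp 2 hA hψA (1:ℝ) with hχ
    have hAint : ∀ n, μ n A = (inner ℝ (g n) χ : ℝ) := by
      intro n
      have hcongr : ∫ x in A, (μ n).rnDeriv ψ x ∂ψ = ∫ x in A, g n x ∂ψ :=
        setIntegral_congr_ae hA (((hm n).coeFn_toLp).mono fun x hx _ => hx.symm)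
      rw [happ n A hA, hcongr, ← L2.inner_indicatorConstLp_one hA hψA (g n), real_inner_comm]
    have hlim : ψ.withDensityᵥ (⇑g₀) A = (inner ℝ g₀ χ : ℝ) := by
      rw [withDensityᵥ_apply hg₀i hA, ← L2.inner_indicatorConstLp_one hA hψA g₀,
        real_inner_comm]
    simp_rw [hAint, hlim]
    exact hweak χ
  refine ⟨φ, ψ.withDensityᵥ ⇑g₀, hφ, ?_, hconv⟩
  refine tv_le_of_abs_le _ ψ fun A hA => ?_
  exact le_of_tendsto (hconv A hA).abs
    (Eventually.of_forall fun i => habs _ (h _) A hA)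
end

section
/- Let K₁, …, K_n be open convex sets in a real Banach space B. Then K₁ ∩ ⋯ ∩ K_n = ∅ if and only if there exist bounded linear functionals L₁, …, L_n on B and real numbers a₁, …, a_n such that L₁ + ⋯ + L_n = 0, a₁ + ⋯ + a_n = 0, for each i either (L_i = 0 and a_i = 0) or (L_i(x) > a_i for all x ∈ K_i), and the second alternative holds for at least one i. -/
open Finset

/-- The continuous linear map `B → (Fin n → B)` putting `b` in coordinate `i`. -/
noncomputable def sgl {B : Type*} [NormedAddCommGroup B] [NormedSpace ℝ B] {n : ℕ} (i : Fin n) :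
    B →L[ℝ] (Fin n → B) :=
  { LinearMap.single ℝ (fun _ : Fin n => B) i with
    cont := by
      refine continuous_pi fun j => ?_
      simp only [LinearMap.single, LinearMap.coe_mk, AddHom.coe_mk]
      by_cases h : j = i
      · subst h; simpa using continuous_id'
      · simpa [Pi.single_eq_of_ne h] using continuous_const }

@[simp] lemma sgl_apply {B : Type*} [NormedAddCommGroup B] [NormedSpace ℝ B] {n : ℕ}
    (i : Fin n) (b : B) : sgl i b = Pi.single i b := rfl

/-- The diagonal continuous linear map `B → (Fin n → B)`. -/
noncomputable def dgl {B : Type*} [NormedAddCommGroup B] [NormedSpace ℝ B] (n : ℕ) :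
    B →L[ℝ] (Fin n → B) :=
  ContinuousLinearMap.pi fun _ => ContinuousLinearMap.id ℝ B

@[simp] lemma dgl_apply {B : Type*} [NormedAddCommGroup B] [NormedSpace ℝ B] {n : ℕ}
    (b : B) : dgl n b = fun _ => b := rfl

/-- **Hahn–Banach separation for finitely many open convex sets.** Open convex sets
`K₁, …, K_n` in a real Banach space `B` have empty intersection iff there are bounded linear
functionals `L₁, …, L_n` and reals `a₁, …, a_n` with `ΣL_i = 0`, `Σa_i = 0`, such that for
each `i` either `L_i = 0` and `a_i = 0`, or `L_i(x) > a_i` for all `x ∈ K_i`, and the second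
alternative holds for at least one `i`. -/
theorem stmt_16 {B : Type*} [NormedAddCommGroup B] [NormedSpace ℝ B] [CompleteSpace B]
    (n : ℕ) (K : Fin n → Set B) (hopen : ∀ i, IsOpen (K i)) (hconv : ∀ i, Convex ℝ (K i)) :
    (⋂ i, K i) = ∅ ↔
      ∃ (L : Fin n → (B →L[ℝ] ℝ)) (a : Fin n → ℝ),
        (∑ i, L i) = 0 ∧ (∑ i, a i) = 0 ∧
        (∀ i, (L i = 0 ∧ a i = 0) ∨ (∀ x ∈ K i, a i < L i x)) ∧
        (∃ i, ∀ x ∈ K i, a i < L i x) := by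
  constructor
  · intro h
    rcases isEmpty_or_nonempty (Fin n) with he | hne
    · exfalso
      have h0 : (0 : B) ∈ ⋂ i, K i := Set.mem_iInter.2 fun i => (he.false i).elim
      rw [h] at h0
      exact h0
    by_cases hK : ∀ i, (K i).Nonempty
    swap
    · push_neg at hK
      obtain ⟨i₀, hi₀⟩ := hK
      exact ⟨0, 0, by simp, by simp, fun i => Or.inl ⟨rfl, rfl⟩,
        ⟨i₀, by simp [hi₀]⟩⟩
    choose y hy using hK
    have hnpos : 0 < n := Fin.pos_iff_nonempty.mpr hne
    have hn0 : (n : ℝ) ≠ 0 := Nat.cast_ne_zero.mpr hnpos.ne'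
    -- separation in the product space
    set s : Set (Fin n → B) := Set.univ.pi K with hs_def
    have hsOpen : IsOpen s := isOpen_set_pi Set.finite_univ fun i _ => hopen i
    have hsConv : Convex ℝ s := convex_pi fun i _ => hconv i
    set t : Set (Fin n → B) := Set.range (dgl (B := B) n) with ht_def
    have htConv : Convex ℝ t := by
      rintro _ ⟨p, rfl⟩ _ ⟨q, rfl⟩ c d hc hd hcd
      exact ⟨c • p + d • q, by funext j; simp⟩
    have hdisj : Disjoint s t := by
      rw [Set.disjoint_left]
      rintro x hx ⟨b, rfl⟩
      have hb : b ∈ ⋂ i, K i := Set.mem_iInter.2 fun i => hx i (Set.mem_univ i)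
      rw [h] at hb
      exact hb
    obtain ⟨f, u, hfu, hft⟩ := geometric_hahn_banach_open hsConv hsOpen htConv hdisj
    -- `f` vanishes on the diagonal and `u ≤ 0`
    have hub : ∀ b : B, u ≤ f (dgl n b) := fun b => hft _ ⟨b, rfl⟩
    have hdiag0 : ∀ b : B, f (dgl n b) = 0 := by
      intro b
      by_contra hb
      have h1 := hub (((u - 1) / f (dgl n b)) • b)
      rw [map_smul, map_smul, smul_eq_mul, div_mul_cancel₀ _ hb] at h1
      linarith
    have hu0 : u ≤ 0 := by
      have := hub 0
      rw [map_zero, map_zero] at this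
      exact this
    -- the functionals
    set L : Fin n → (B →L[ℝ] ℝ) := fun i => -(f.comp (sgl i)) with hL_def
    have hdecomp : ∀ z : Fin n → B, f z = ∑ i, f (Pi.single i (z i)) := by
      intro z
      conv_lhs => rw [← Finset.univ_sum_single z]
      rw [map_sum]
    have hsum : ∀ z : Fin n → B, (∀ i, z i ∈ K i) → -u < ∑ i, L i (z i) := by
      intro z hz
      have h1 : f z < u := hfu z fun i _ => hz i
      rw [hdecomp] at h1
      have : ∑ i, L i (z i) = -∑ i, f (Pi.single i (z i)) := by
        rw [← Finset.sum_neg_distrib]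
        exact Finset.sum_congr rfl fun i _ => by simp [hL_def]
      rw [this]
      linarith
    have hLsum : (∑ i, L i) = 0 := by
      ext b
      rw [ContinuousLinearMap.sum_apply, ContinuousLinearMap.zero_apply]
      have h1 : ∑ i, L i b = -∑ i, f (Pi.single i b) := by
        rw [← Finset.sum_neg_distrib]
        exact Finset.sum_congr rfl fun i _ => by simp [hL_def]
      rw [h1, ← map_sum]
      have h2 : (∑ i, Pi.single i b) = dgl n b := by
        funext j
        simp [Finset.sum_apply, Pi.single_apply]
      rw [h2, hdiag0 b]
      simp
    -- lower bounds
    have hlow : ∀ i, ∀ x ∈ K i,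
        -u - ∑ j ∈ Finset.univ.erase i, L j (y j) < L i x := by
      intro i x hx
      have hz : ∀ j, Function.update y i x j ∈ K j := by
        intro j
        rcases eq_or_ne j i with rfl | hj
        · simpa using hx
        · simpa [Function.update_of_ne hj] using hy j
      have h1 := hsum _ hz
      rw [← Finset.add_sum_erase _ _ (Finset.mem_univ i)] at h1
      have h2 : ∑ j ∈ Finset.univ.erase i, L j (Function.update y i x j)
          = ∑ j ∈ Finset.univ.erase i, L j (y j) :=
        Finset.sum_congr rfl fun j hj =>
          by rw [Function.update_of_ne (Finset.ne_of_mem_erase hj)]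
      rw [Function.update_self, h2] at h1
      linarith
    have hbdd : ∀ i, BddBelow (L i '' K i) := by
      intro i
      refine ⟨-u - ∑ j ∈ Finset.univ.erase i, L j (y j), ?_⟩
      rintro r ⟨x, hx, rfl⟩
      exact (hlow i x hx).le
    have hcne : ∀ i, (L i '' K i).Nonempty := fun i => ⟨L i (y i), y i, hy i, rfl⟩
    set c : Fin n → ℝ := fun i => sInf (L i '' K i) with hc_def
    have hcle : ∀ i, ∀ x ∈ K i, c i ≤ L i x := fun i x hx =>
      csInf_le (hbdd i) ⟨x, hx, rfl⟩
    -- strictness when `L i ≠ 0`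
    have hstrict : ∀ i, L i ≠ 0 → ∀ x ∈ K i, c i < L i x := by
      intro i hLi x hx
      obtain ⟨v, hv⟩ : ∃ v, L i v ≠ 0 := by
        by_contra hc'
        push_neg at hc'
        exact hLi (ContinuousLinearMap.ext fun v => by simpa using hc' v)
      set w : B := (L i v)⁻¹ • v with hw_def
      have hw : L i w = 1 := by
        rw [hw_def, map_smul, smul_eq_mul, inv_mul_cancel₀ hv]
      obtain ⟨ε, hε, hball⟩ := Metric.isOpen_iff.1 (hopen i) x hx
      set δ : ℝ := ε / (2 * (‖w‖ + 1)) with hδ_def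
      have hwpos : (0:ℝ) < ‖w‖ + 1 := by positivity
      have hδpos : 0 < δ := by positivity
      have hx' : x - δ • w ∈ K i := by
        apply hball
        rw [Metric.mem_ball, dist_eq_norm]
        have : x - δ • w - x = -(δ • w) := by abel
        rw [this, norm_neg, norm_smul, Real.norm_of_nonneg hδpos.le]
        calc δ * ‖w‖ < δ * (‖w‖ + 1) := by nlinarith
          _ = ε / 2 := by rw [hδ_def]; field_simp
          _ < ε := by linarith
      have h1 : c i ≤ L i (x - δ • w) := hcle i _ hx'
      have h2 : L i (x - δ • w) = L i x - δ := by
        rw [map_sub, map_smul, hw, smul_eq_mul, mul_one]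
      linarith
    have hc0 : ∀ i, L i = 0 → c i = 0 := by
      intro i hLi
      refine le_antisymm ?_ ?_
      · have := hcle i (y i) (hy i)
        simpa [hLi] using this
      · refine le_csInf (hcne i) ?_
        rintro r ⟨x, hx, rfl⟩
        simp [hLi]
    set S : ℝ := ∑ i, c i with hS_def
    have hSu : -u ≤ S := by
      refine le_of_forall_pos_lt_add fun ε hε => ?_
      have hεn : 0 < ε / n := div_pos hε (Nat.cast_pos.mpr hnpos)
      have hpick : ∀ i, ∃ x ∈ K i, L i x < c i + ε / n := by
        intro i
        obtain ⟨r, hr, hrlt⟩ := Real.lt_sInf_add_pos (hcne i) hεn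
        obtain ⟨x, hx, rfl⟩ := hr
        exact ⟨x, hx, hrlt⟩
      choose z hz1 hz2 using hpick
      have h1 := hsum z hz1
      have h2 : ∑ i, L i (z i) < ∑ i, (c i + ε / n) :=
        Finset.sum_lt_sum_of_nonempty Finset.univ_nonempty fun i _ => hz2 i
      have h3 : ∑ i, (c i + ε / n) = S + ε := by
        rw [Finset.sum_add_distrib, Finset.sum_const, Finset.card_univ,
          Fintype.card_fin, nsmul_eq_mul, mul_div_cancel₀ _ hn0]
      linarith
    have hS0 : 0 ≤ S := by linarith
    set a : Fin n → ℝ := fun i => c i - S / n with ha_def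
    have hasum : ∑ i, a i = 0 := by
      rw [Finset.sum_sub_distrib, Finset.sum_const, Finset.card_univ, Fintype.card_fin,
        nsmul_eq_mul, mul_div_cancel₀ _ hn0, sub_self]
    have hmain : ∀ i, L i ≠ 0 → ∀ x ∈ K i, a i < L i x := by
      intro i hLi x hx
      have h1 := hstrict i hLi x hx
      have h2 : 0 ≤ S / n := div_nonneg hS0 (Nat.cast_nonneg n)
      simp only [ha_def]
      linarith
    refine ⟨L, a, hLsum, hasum, ?_, ?_⟩
    · intro i
      by_cases hLi : L i = 0
      · rcases eq_or_lt_of_le hS0 with hSe | hSp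
        · left
          exact ⟨hLi, by simp [ha_def, hc0 i hLi, ← hSe]⟩
        · right
          intro x hx
          have : a i = -(S / n) := by simp [ha_def, hc0 i hLi]
          rw [this]
          have : 0 < S / n := div_pos hSp (Nat.cast_pos.mpr hnpos)
          simp [hLi]
          linarith
      · exact Or.inr (hmain i hLi)
    · have hex : ∃ i, L i ≠ 0 := by
        by_contra hc'
        push_neg at hc'
        have h1 := hsum y hy
        have h2 : ∑ i, L i (y i) = 0 :=
          Finset.sum_eq_zero fun i _ => by simp [hc' i]
        rw [h2] at h1
        linarith
      obtain ⟨i, hi⟩ := hex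
      exact ⟨i, hmain i hi⟩
  · rintro ⟨L, a, hL, ha, hall, i₀, hi₀⟩
    rw [Set.eq_empty_iff_forall_notMem]
    intro x hx
    rw [Set.mem_iInter] at hx
    have h1 : ∀ i, a i ≤ L i x := by
      intro i
      rcases hall i with ⟨hL0, ha0⟩ | hlt
      · simp [hL0, ha0]
      · exact (hlt x (hx i)).le
    have h2 : a i₀ < L i₀ x := hi₀ x (hx i₀)
    have h3 : ∑ i, a i < ∑ i, L i x :=
      Finset.sum_lt_sum (fun i _ => h1 i) ⟨i₀, Finset.mem_univ _, h2⟩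
    have h4 : ∑ i, L i x = 0 := by
      rw [← ContinuousLinearMap.sum_apply, hL, ContinuousLinearMap.zero_apply]
    rw [ha, h4] at h3
    exact lt_irrefl 0 h3
end
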